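/- arXiv:1601.04223 — 9 statements merged into one kernel-verified Lean document; each statement's English description precedes it below -/
import Mathlib

section
/- For every integer k ≥ 1, the k-th Catalan number satisfies C_k < 2^{2k+1} / ((k+1)·√(π(4k+1))). -/
open Real Filter Topology

noncomputable def C (k : ℕ) : ℝ := (Nat.choose (2 * k) k : ℝ) / ((k : ℝ) + 1)

noncomputable def S (n : ℕ) : ℝ := ∑ k ∈ Finset.Icc 1 n, C k

noncomputable def u (n : ℕ) : ℝ := 4 ^ (n + 1) / (3 * Real.sqrt (π * (n : ℝ) ^ 3))

noncomputable def ϑ (n : ℕ) : ℝ := 4 ^ (n + 1) / (3 * ((n : ℝ) + 1) * Real.sqrt (π * n))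

noncomputable def b (n : ℕ) : ℝ := (Nat.centralBinom n : ℝ)^2 * (π*(4*n+1)) / 16^n

lemma binom_fact (n : ℕ) : (Nat.centralBinom n : ℝ) * (n.factorial : ℝ)^2 = ((2*n).factorial : ℝ) := by
  have := Nat.choose_mul_factorial_mul_factorial (Nat.le_mul_of_pos_left n (by norm_num) : n ≤ 2*n)
  rw [Nat.centralBinom]
  rw [show 2*n - n = n from by omega] at this
  push_cast [← this]
  ring

lemma b_eq (n : ℕ) : b n = π * ((4*n+1)/(2*n+1)) / Real.Wallis.W n := by
  have hW := Real.Wallis.W_eq_factorial_ratio n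
  have hb := binom_fact n
  have h2 : ((n).factorial : ℝ) ≠ 0 := by positivity
  have h3 : (2*(n:ℝ)+1) ≠ 0 := by positivity
  have hcb : (Nat.centralBinom n : ℝ) ≠ 0 := by
    exact_mod_cast (Nat.centralBinom_pos n).ne'
  have h16 : ((2:ℝ)^(4*n)) = 16^n := by rw [pow_mul]; norm_num
  rw [b, hW, h16, ← hb]
  field_simp

lemma b_lim : Tendsto b atTop (𝓝 4) := by
  have h1 : Tendsto (fun n : ℕ => π * ((4*(n:ℝ)+1)/(2*n+1)) / Real.Wallis.W n)
      atTop (𝓝 (π * 2 / (π/2))) := by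
    apply Tendsto.div
    · apply Tendsto.const_mul
      have : (fun n : ℕ => (4*(n:ℝ)+1)/(2*n+1)) = fun n : ℕ => 2 - 1/(2*(n:ℝ)+1) := by
        funext n
        have : (2*(n:ℝ)+1) ≠ 0 := by positivity
        field_simp
        ring
      rw [this]
      have hg : Tendsto (fun n : ℕ => 2*(n:ℝ)+1) atTop atTop :=
        Tendsto.atTop_add (tendsto_natCast_atTop_atTop.const_mul_atTop two_pos)
          tendsto_const_nhds
      have h0 : Tendsto (fun n : ℕ => 1/(2*(n:ℝ)+1)) atTop (𝓝 0) :=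
        Tendsto.div_atTop tendsto_const_nhds hg
      simpa using (tendsto_const_nhds (x := (2:ℝ))).sub h0
    · exact Real.Wallis.tendsto_W_nhds_pi_div_two
    · exact (div_pos pi_pos two_pos).ne'
  have h2 : π * 2 / (π/2) = 4 := by
    field_simp
    ring
  rw [h2] at h1
  exact h1.congr fun n => (b_eq n).symm

lemma b_mono : StrictMono b := by
  apply strictMono_nat_of_lt_succ
  intro n
  have keyR : ((n:ℝ)+1) * (Nat.centralBinom (n+1) : ℝ) = 2*(2*n+1) * (Nat.centralBinom n : ℝ) := by
    exact_mod_cast Nat.succ_mul_centralBinom_succ n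
  have hcb : (0:ℝ) < (Nat.centralBinom n : ℝ) := by exact_mod_cast Nat.centralBinom_pos n
  rw [b, b, div_lt_div_iff₀ (by positivity) (by positivity),
    ← mul_lt_mul_iff_left₀ (show (0:ℝ) < ((n:ℝ)+1)^2 by positivity)]
  have hsq := congrArg (fun x : ℝ => x^2) keyR
  simp only [mul_pow] at hsq
  have hP : (0:ℝ) < π * 16^n * (Nat.centralBinom n : ℝ)^2 := by positivity
  have hQ : (0:ℝ) ≤ π * (4*((n:ℝ)+1)+1) * 16^n := by positivity
  push_cast
  rw [show (16:ℝ)^(n+1) = 16^n*16 from pow_succ _ _]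
  nlinarith [hsq, hP, hQ]

lemma b_lt_four (k : ℕ) : b k < 4 := by
  have h1 : b k < b (k+1) := b_mono (Nat.lt_succ_self k)
  have h2 : b (k+1) ≤ 4 := b_mono.monotone.ge_of_tendsto b_lim (k+1)
  linarith

theorem stmt4 (k : ℕ) (hk : 1 ≤ k) :
    C k < 2 ^ (2 * k + 1) / (((k : ℝ) + 1) * Real.sqrt (π * (4 * (k : ℝ) + 1))) := by
  have hb := b_lt_four k
  have harg : (0:ℝ) < π * (4 * (k:ℝ) + 1) := by positivity
  set s := Real.sqrt (π * (4 * (k:ℝ) + 1)) with hs_def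
  have hs : 0 < s := Real.sqrt_pos.mpr harg
  have hs2 : s^2 = π * (4 * (k:ℝ) + 1) := Real.sq_sqrt harg.le
  have hcb : ((Nat.choose (2*k) k : ℕ) : ℝ) = (Nat.centralBinom k : ℝ) := by
    rw [Nat.centralBinom]
  have h16 : (0:ℝ) < 16^k := by positivity
  have hbin : (Nat.centralBinom k : ℝ)^2 * (π*(4*k+1)) < 4 * 16^k := by
    rw [b, div_lt_iff₀ h16] at hb
    linarith
  have hpow : ((2:ℝ)^(2*k+1))^2 = 4*16^k := by
    rw [← pow_mul, show (2*k+1)*2 = 4*k+2 by ring, pow_add,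
      show (4:ℕ)*k = k*4 by ring, pow_mul, show ((16:ℝ))^k = ((2:ℝ)^4)^k by norm_num,
      ← pow_mul, show k*4 = 4*k by ring, pow_mul]
    ring
  have key : (Nat.centralBinom k : ℝ) * s < 2^(2*k+1) := by
    have hcbp : (0:ℝ) ≤ (Nat.centralBinom k : ℝ) := Nat.cast_nonneg _
    refine lt_of_pow_lt_pow_left₀ 2 (by positivity) ?_
    rw [mul_pow, hs2, hpow]
    exact hbin
  have hk1 : (0:ℝ) < (k:ℝ) + 1 := by positivity
  rw [C, hcb, div_lt_div_iff₀ hk1 (by positivity)]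
  nlinarith [mul_lt_mul_of_pos_right key hk1]
end

section
/- For every integer k ≥ 1, the k-th Catalan number satisfies C_k > 2^{2k-1}·√(4k-1) / (k(k+1)·√π). -/
open Real Filter
open scoped Topology

/-- auxiliary sequence: `π (2k ⬝ centralBinom k)² / (16^k (4k-1))`. It decreases to 1. -/
noncomputable def fb (k : ℕ) : ℝ :=
  π * (2 * (k : ℝ) * Nat.centralBinom k) ^ 2 / (16 ^ k * (4 * (k : ℝ) - 1))

lemma fb_succ_lt (k : ℕ) (hk : 1 ≤ k) : fb (k + 1) < fb k := by
  have hK : (1 : ℝ) ≤ (k : ℝ) := by exact_mod_cast hk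
  have hc : (0 : ℝ) < (Nat.centralBinom k : ℝ) := by
    exact_mod_cast Nat.centralBinom_pos k
  have hrec : ((k : ℝ) + 1) * (Nat.centralBinom (k + 1) : ℝ)
      = 2 * (2 * (k : ℝ) + 1) * (Nat.centralBinom k : ℝ) := by
    have := Nat.succ_mul_centralBinom_succ k
    have := congrArg (Nat.cast : ℕ → ℝ) this
    push_cast at this
    linarith [this]
  have h16 : (0 : ℝ) < 16 ^ k := by positivity
  have hpi : (0 : ℝ) < π := Real.pi_pos
  unfold fb
  push_cast
  rw [div_lt_div_iff₀ (by nlinarith [pow_pos (show (0:ℝ) < 16 by norm_num) (k+1)])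
    (by nlinarith)]
  have key : π * (2 * ((k : ℝ) + 1) * (Nat.centralBinom (k+1) : ℝ)) ^ 2 * (16 ^ k * (4 * (k : ℝ) - 1))
      = (π * 16 ^ k * (Nat.centralBinom k : ℝ) ^ 2) * (16 * (2 * (k : ℝ) + 1) ^ 2 * (4 * (k : ℝ) - 1)) := by
    rw [show (2 * ((k : ℝ) + 1) * (Nat.centralBinom (k+1) : ℝ))
        = 2 * (((k : ℝ) + 1) * (Nat.centralBinom (k+1) : ℝ)) by ring, hrec]
    ring
  have key2 : π * (2 * (k : ℝ) * (Nat.centralBinom k : ℝ)) ^ 2 * (16 ^ (k+1) * (4 * ((k : ℝ) + 1) - 1))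
      = (π * 16 ^ k * (Nat.centralBinom k : ℝ) ^ 2) * (64 * (k : ℝ) ^ 2 * (4 * (k : ℝ) + 3)) := by
    ring
  push_cast at key key2 ⊢
  rw [key, key2]
  apply mul_lt_mul_of_pos_left _ (by positivity)
  nlinarith [sq_nonneg ((k:ℝ) - 1)]

lemma fb_le (k n : ℕ) (hk : 1 ≤ k) (hn : k ≤ n) : fb n ≤ fb k := by
  induction n, hn using Nat.le_induction with
  | base => exact le_rfl
  | succ n hn ih => exact le_trans (le_of_lt (fb_succ_lt n (le_trans hk hn))) ih

lemma cb_eq (k : ℕ) (hk : 1 ≤ k) :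
    (Nat.centralBinom k : ℝ)
      = Stirling.stirlingSeq (2 * k) / (Stirling.stirlingSeq k) ^ 2 * 4 ^ k / Real.sqrt k := by
  have hk' : (0 : ℝ) < (k : ℝ) := by exact_mod_cast hk
  have hsk : (0 : ℝ) < Real.sqrt k := Real.sqrt_pos.mpr hk'
  have he : (0 : ℝ) < Real.exp 1 := Real.exp_pos 1
  have hcb : ((2 * k).factorial : ℝ) = (Nat.centralBinom k : ℝ) * (k.factorial * k.factorial) := by
    have h := Nat.choose_mul_factorial_mul_factorial (show k ≤ 2 * k by omega)
    have h2 : 2 * k - k = k := by omega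
    rw [h2] at h
    have := congrArg (Nat.cast : ℕ → ℝ) h
    push_cast at this
    rw [Nat.centralBinom]
    push_cast
    linarith [this]
  have hs2 : Real.sqrt (2 * (2 * k : ℕ)) = 2 * Real.sqrt k := by
    push_cast
    rw [show (2 : ℝ) * (2 * (k : ℝ)) = 4 * k by ring]
    rw [show (4 : ℝ) * k = 2 ^ 2 * k by norm_num]
    rw [Real.sqrt_mul (by positivity), Real.sqrt_sq (by norm_num)]
  unfold Stirling.stirlingSeq
  rw [hs2, hcb]
  have hfk : (0 : ℝ) < (k.factorial : ℝ) := by exact_mod_cast k.factorial_pos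
  have hp : (2 * (k : ℝ) / Real.exp 1) ^ (2 * k) = 4 ^ k * (((k : ℝ) / Real.exp 1) ^ k) ^ 2 := by
    rw [show 2 * (k : ℝ) / Real.exp 1 = 2 * ((k : ℝ) / Real.exp 1) by ring, mul_pow,
      show (4:ℝ) ^ k = 2 ^ (2 * k) by rw [pow_mul]; norm_num, ← pow_mul, mul_comm k 2]
  push_cast
  rw [hp]
  have hq : ((k : ℝ) / Real.exp 1) ^ k ≠ 0 := by positivity
  have hs2k : Real.sqrt (2 * (k : ℝ)) ≠ 0 := by positivity
  field_simp
  ring_nf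
  rw [Real.sq_sqrt hk'.le, Real.sq_sqrt (by positivity)]
  ring

noncomputable def gb (k : ℕ) : ℝ :=
  4 * π * k / (4 * (k : ℝ) - 1) * Stirling.stirlingSeq (2 * k) ^ 2 / Stirling.stirlingSeq k ^ 4

lemma stirling_pos (k : ℕ) (hk : 1 ≤ k) : 0 < Stirling.stirlingSeq k := by
  obtain ⟨m, rfl⟩ := Nat.exists_eq_add_of_le hk
  simpa [Nat.add_comm] using Stirling.stirlingSeq'_pos m

lemma fb_eq (k : ℕ) (hk : 1 ≤ k) : fb k = gb k := by
  have hk' : (0 : ℝ) < (k : ℝ) := by exact_mod_cast hk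
  have hsk : (0 : ℝ) < Real.sqrt k := Real.sqrt_pos.mpr hk'
  have hs1 : 0 < Stirling.stirlingSeq k := stirling_pos k hk
  have hs2 : 0 < Stirling.stirlingSeq (2 * k) := stirling_pos (2 * k) (by omega)
  have hk1 : (1 : ℝ) ≤ (k : ℝ) := by exact_mod_cast hk
  have hd : (0 : ℝ) < 4 * (k : ℝ) - 1 := by linarith
  have h16 : (16 : ℝ) ^ k = 4 ^ k * 4 ^ k := by rw [← mul_pow]; norm_num
  unfold fb gb
  rw [cb_eq k hk, h16]
  field_simp
  ring_nf
  rw [Real.sq_sqrt hk'.le]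
  ring

lemma tendsto_gb : Tendsto gb atTop (𝓝 1) := by
  have hpi : (0 : ℝ) < π := Real.pi_pos
  have h1 : Tendsto (fun k : ℕ => Stirling.stirlingSeq k) atTop (𝓝 (Real.sqrt π)) :=
    Stirling.tendsto_stirlingSeq_sqrt_pi
  have hm : Tendsto (fun k : ℕ => 2 * k) atTop atTop :=
    tendsto_atTop_atTop.mpr fun b => ⟨b, fun a ha => by omega⟩
  have h2 : Tendsto (fun k : ℕ => Stirling.stirlingSeq (2 * k)) atTop (𝓝 (Real.sqrt π)) :=
    h1.comp hm
  have hden : Tendsto (fun k : ℕ => 4 * (k : ℝ) - 1) atTop atTop := by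
    apply tendsto_atTop_add_const_right
    exact (tendsto_natCast_atTop_atTop).const_mul_atTop (by norm_num)
  have hinv : Tendsto (fun k : ℕ => 1 / (4 * (k : ℝ) - 1)) atTop (𝓝 0) := by
    rw [show (fun k : ℕ => 1 / (4 * (k : ℝ) - 1)) = (fun k : ℕ => 4 * (k : ℝ) - 1)⁻¹ by ext; simp]
    exact hden.inv_tendsto_atTop
  have h3 : Tendsto (fun k : ℕ => 4 * π * (k : ℝ) / (4 * (k : ℝ) - 1)) atTop (𝓝 π) := by
    have heq : ∀ᶠ k : ℕ in atTop, π * (1 + 1 / (4 * (k : ℝ) - 1))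
        = 4 * π * (k : ℝ) / (4 * (k : ℝ) - 1) := by
      filter_upwards [eventually_ge_atTop 1] with k hk
      have hk' : (1 : ℝ) ≤ (k : ℝ) := by exact_mod_cast hk
      have hd : (4 * (k : ℝ) - 1) ≠ 0 := by nlinarith
      field_simp
      ring
    have hadd : Tendsto (fun k : ℕ => π * (1 + 1 / (4 * (k : ℝ) - 1))) atTop
        (𝓝 (π * (1 + 0))) := (tendsto_const_nhds.add hinv).const_mul π
    simp only [add_zero, mul_one] at hadd
    exact Tendsto.congr' heq hadd
  have h4 : Tendsto gb atTop
      (𝓝 (π * Real.sqrt π ^ 2 / Real.sqrt π ^ 4)) := by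
    have := ((h3.mul (h2.pow 2)).div (h1.pow 4)
      (by positivity : Real.sqrt π ^ 4 ≠ 0))
    exact this.congr fun k => by simp only [Pi.div_apply]; unfold gb; ring
  convert h4 using 2
  rw [Real.sq_sqrt hpi.le, show Real.sqrt π ^ 4 = (Real.sqrt π ^ 2) ^ 2 by ring,
    Real.sq_sqrt hpi.le]
  field_simp

lemma tendsto_fb : Tendsto fb atTop (𝓝 1) := by
  apply tendsto_gb.congr'
  filter_upwards [eventually_ge_atTop 1] with k hk
  exact (fb_eq k hk).symm

lemma one_le_fb (k : ℕ) (hk : 1 ≤ k) : 1 ≤ fb k :=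
  le_of_tendsto tendsto_fb (eventually_atTop.mpr ⟨k, fun n hn => fb_le k n hk hn⟩)

lemma one_lt_fb (k : ℕ) (hk : 1 ≤ k) : 1 < fb k :=
  lt_of_le_of_lt (one_le_fb (k + 1) (by omega)) (fb_succ_lt k hk)

theorem stmt5 (k : ℕ) (hk : 1 ≤ k) :
    C k > 2 ^ (2 * k - 1) * Real.sqrt (4 * (k : ℝ) - 1) / ((k : ℝ) * ((k : ℝ) + 1) * Real.sqrt π) := by
  have hk' : (1 : ℝ) ≤ (k : ℝ) := by exact_mod_cast hk
  have hk0 : (0 : ℝ) < (k : ℝ) := by linarith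
  have hpi : (0 : ℝ) < π := Real.pi_pos
  have hsp : (0 : ℝ) < Real.sqrt π := Real.sqrt_pos.mpr hpi
  have hc : (0 : ℝ) < (Nat.centralBinom k : ℝ) := by exact_mod_cast Nat.centralBinom_pos k
  have hd : (0 : ℝ) < 4 * (k : ℝ) - 1 := by linarith
  have hfb := one_lt_fb k hk
  have h16 : (0 : ℝ) < 16 ^ k * (4 * (k : ℝ) - 1) := by positivity
  have hineq : 16 ^ k * (4 * (k : ℝ) - 1) < π * (2 * (k : ℝ) * (Nat.centralBinom k : ℝ)) ^ 2 := by
    unfold fb at hfb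
    rw [lt_div_iff₀ h16] at hfb
    linarith
  set A := 2 * (k : ℝ) * (Nat.centralBinom k : ℝ) * Real.sqrt π with hA
  set B := 4 ^ k * Real.sqrt (4 * (k : ℝ) - 1) with hB
  have hApos : 0 < A := by positivity
  have hB2 : B ^ 2 = 16 ^ k * (4 * (k : ℝ) - 1) := by
    rw [hB, mul_pow, Real.sq_sqrt hd.le, ← pow_mul, show (4:ℝ) ^ (k * 2) = 16 ^ k by
      rw [mul_comm, pow_mul]; norm_num]
  have hA2 : A ^ 2 = π * (2 * (k : ℝ) * (Nat.centralBinom k : ℝ)) ^ 2 := by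
    rw [hA, mul_pow, Real.sq_sqrt hpi.le]; ring
  have hBA : B < A := by
    refine lt_of_pow_lt_pow_left₀ 2 hApos.le ?_
    rw [hB2, hA2]; exact hineq
  rw [gt_iff_lt, div_lt_iff₀ (by positivity)]
  have hC : C k * ((k : ℝ) * ((k : ℝ) + 1) * Real.sqrt π)
      = (k : ℝ) * (Nat.centralBinom k : ℝ) * Real.sqrt π := by
    unfold C
    rw [show ((2 * k).choose k : ℝ) = (Nat.centralBinom k : ℝ) by rw [Nat.centralBinom]]
    field_simp
  have h2k : (2 : ℝ) ^ (2 * k - 1) * 2 = 4 ^ k := by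
    rw [← pow_succ, show 2 * k - 1 + 1 = 2 * k by omega, pow_mul]; norm_num
  rw [hC]
  nlinarith [hBA, Real.sqrt_nonneg (4 * (k : ℝ) - 1)]
end

section
/- For every integer n ≥ 1, the sum S_n of the first n Catalan numbers satisfies S_n < 4^{n+1} / (3·√(π n^3)). -/
open Real Filter

noncomputable def aseq (n : ℕ) : ℝ := (Nat.centralBinom n : ℝ) * Real.sqrt n / 4 ^ n

lemma g_eq (n : ℕ) (hn : 1 ≤ n) :
    Stirling.stirlingSeq (2 * n) / (Stirling.stirlingSeq n) ^ 2 = aseq n := by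
  have hn0 : (0:ℝ) < n := by exact_mod_cast hn
  have hx : (0:ℝ) < Real.sqrt n := Real.sqrt_pos.2 hn0
  have hxx : Real.sqrt n * Real.sqrt n = n := Real.mul_self_sqrt hn0.le
  have he : (0:ℝ) < Real.exp 1 := Real.exp_pos 1
  have hf : (0:ℝ) < (n.factorial : ℝ) := by exact_mod_cast n.factorial_pos
  have hcb : (((2*n).factorial) : ℝ) = (Nat.centralBinom n : ℝ) * n.factorial * n.factorial := by
    have h := Nat.choose_mul_factorial_mul_factorial (show n ≤ 2*n by omega)
    rw [show 2*n - n = n by omega] at h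
    rw [Nat.centralBinom_eq_two_mul_choose]
    exact_mod_cast h.symm
  have h4 : Real.sqrt (2 * ((2*n : ℕ) : ℝ)) = 2 * Real.sqrt n := by
    push_cast
    rw [show 2 * (2 * (n:ℝ)) = (2:ℝ)^2 * n by ring, Real.sqrt_mul (by positivity),
      Real.sqrt_sq (by norm_num)]
  have hp : (((2*n : ℕ) : ℝ) / Real.exp 1) ^ (2*n) = 4 ^ n * ((n:ℝ) / Real.exp 1) ^ (2*n) := by
    push_cast
    rw [show 2 * (n:ℝ) / Real.exp 1 = 2 * ((n:ℝ)/Real.exp 1) by ring, mul_pow,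
      show (2:ℝ)^(2*n) = 4^n by rw [pow_mul]; norm_num]
  have hpow : (0:ℝ) < ((n:ℝ) / Real.exp 1) ^ (2*n) := by positivity
  rw [Stirling.stirlingSeq, Stirling.stirlingSeq, aseq, hcb, h4, hp]
  have : ((n:ℝ) / Real.exp 1) ^ n * ((n:ℝ)/Real.exp 1) ^ n = ((n:ℝ)/Real.exp 1) ^ (2*n) := by
    rw [← pow_add]; ring_nf
  field_simp
  ring_nf
  rw [Real.sq_sqrt (by positivity : (0:ℝ) ≤ (n:ℝ) * 2), Real.sq_sqrt hn0.le]
  ring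

lemma aseq_lt_succ (n : ℕ) (hn : 1 ≤ n) : aseq n < aseq (n + 1) := by
  have hn0 : (0:ℝ) < n := by exact_mod_cast hn
  have hx : (0:ℝ) < Real.sqrt n := Real.sqrt_pos.2 hn0
  have hy : (0:ℝ) < Real.sqrt ((n:ℝ)+1) := Real.sqrt_pos.2 (by linarith)
  have hxx : Real.sqrt n * Real.sqrt n = n := Real.mul_self_sqrt hn0.le
  have hyy : Real.sqrt ((n:ℝ)+1) * Real.sqrt ((n:ℝ)+1) = (n:ℝ)+1 :=
    Real.mul_self_sqrt (by linarith)
  have hcb : (0:ℝ) < (Nat.centralBinom n : ℝ) := by exact_mod_cast n.centralBinom_pos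
  have hrec : ((n:ℝ)+1) * (Nat.centralBinom (n+1) : ℝ)
      = 2 * (2*(n:ℝ)+1) * (Nat.centralBinom n : ℝ) := by
    have := Nat.succ_mul_centralBinom_succ n
    exact_mod_cast this
  have key : 2 * ((n:ℝ)+1) * Real.sqrt n < (2*(n:ℝ)+1) * Real.sqrt ((n:ℝ)+1) := by
    have hx2 : Real.sqrt n ^ 2 = n := Real.sq_sqrt hn0.le
    have hy2 : Real.sqrt ((n:ℝ)+1) ^ 2 = (n:ℝ)+1 := Real.sq_sqrt (by linarith)
    have h1 : (2 * ((n:ℝ)+1) * Real.sqrt n) ^ 2 < ((2*(n:ℝ)+1) * Real.sqrt ((n:ℝ)+1)) ^ 2 := by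
      have e1 : (2 * ((n:ℝ)+1) * Real.sqrt n) ^ 2 = 4*((n:ℝ)+1)^2*(n:ℝ) := by
        rw [mul_pow, hx2]; ring
      have e2 : ((2*(n:ℝ)+1) * Real.sqrt ((n:ℝ)+1)) ^ 2 = (2*(n:ℝ)+1)^2*((n:ℝ)+1) := by
        rw [mul_pow, hy2]
      rw [e1, e2]; nlinarith [hn0]
    exact lt_of_pow_lt_pow_left₀ 2 (by positivity) h1
  have h4 : (0:ℝ) < 4 ^ n := by positivity
  rw [aseq, aseq, div_lt_div_iff₀ (by positivity) (by positivity)]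
  have hcast : ((n+1 : ℕ) : ℝ) = (n:ℝ) + 1 := by push_cast; ring
  rw [hcast, pow_succ]
  have hpos : (0:ℝ) < (n:ℝ)+1 := by linarith
  rw [← mul_lt_mul_iff_of_pos_left hpos]
  have hrec2 : ((n:ℝ)+1) * (Nat.centralBinom (n+1) : ℝ) * (Real.sqrt ((n:ℝ)+1) * 4^n)
      = 2*(2*(n:ℝ)+1)*(Nat.centralBinom n : ℝ) * (Real.sqrt ((n:ℝ)+1) * 4^n) := by rw [hrec]
  nlinarith [mul_lt_mul_of_pos_left key (mul_pos hcb h4), hrec2]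

lemma aseq_mono : Monotone aseq := by
  apply monotone_nat_of_le_succ
  intro n
  rcases Nat.eq_zero_or_pos n with h | h
  · subst h
    simp [aseq]
    positivity
  · exact (aseq_lt_succ n h).le

lemma aseq_tendsto : Filter.Tendsto aseq Filter.atTop (nhds (1 / Real.sqrt π)) := by
  have h2 : Filter.Tendsto (fun n => Stirling.stirlingSeq (2 * n)) Filter.atTop
      (nhds (Real.sqrt π)) :=
    Stirling.tendsto_stirlingSeq_sqrt_pi.comp
      (Filter.tendsto_atTop_mono (fun n => Nat.le_mul_of_pos_left n two_pos) Filter.tendsto_id)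
  have h1 : Filter.Tendsto (fun n => (Stirling.stirlingSeq n) ^ 2) Filter.atTop
      (nhds ((Real.sqrt π) ^ 2)) := Stirling.tendsto_stirlingSeq_sqrt_pi.pow 2
  have hne : (Real.sqrt π) ^ 2 ≠ 0 := by
    have := Real.pi_pos; positivity
  have hg := h2.div h1 hne
  have hL : Real.sqrt π / (Real.sqrt π) ^ 2 = 1 / Real.sqrt π := by
    have := Real.pi_pos
    rw [sq]
    rw [div_mul_eq_div_div]
    congr 1
    field_simp
  rw [hL] at hg
  apply hg.congr'
  filter_upwards [Filter.eventually_ge_atTop 1] with n hn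
  exact g_eq n hn

lemma aseq_lt (n : ℕ) (hn : 1 ≤ n) : aseq n < 1 / Real.sqrt π :=
  lt_of_lt_of_le (aseq_lt_succ n hn) (aseq_mono.ge_of_tendsto aseq_tendsto (n+1))

noncomputable def t (k : ℕ) : ℝ := 4^k / (((k:ℝ)+1) * Real.sqrt k)
noncomputable def U (n : ℕ) : ℝ := 4^(n+1) / (3 * Real.sqrt ((n:ℝ)^3))

lemma step (n : ℕ) (hn : 3 ≤ n) : U n + t (n+1) ≤ U (n+1) := by
  have hn3 : (3:ℝ) ≤ n := by exact_mod_cast hn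
  have hn0 : (0:ℝ) < n := by linarith
  have hx : (0:ℝ) < Real.sqrt n := Real.sqrt_pos.2 hn0
  have hy : (0:ℝ) < Real.sqrt ((n:ℝ)+1) := Real.sqrt_pos.2 (by linarith)
  have hxx : Real.sqrt n * Real.sqrt n = n := Real.mul_self_sqrt hn0.le
  have hyy : Real.sqrt ((n:ℝ)+1) * Real.sqrt ((n:ℝ)+1) = (n:ℝ)+1 :=
    Real.mul_self_sqrt (by linarith)
  have hx2 : Real.sqrt n ^ 2 = n := Real.sq_sqrt hn0.le
  have hy2 : Real.sqrt ((n:ℝ)+1) ^ 2 = (n:ℝ)+1 := Real.sq_sqrt (by linarith)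
  have hP : (0:ℝ) < 4^(n+1) := by positivity
  have hs3 : Real.sqrt ((n:ℝ)^3) = n * Real.sqrt n := by
    rw [show ((n:ℝ)^3) = (n:ℝ)^2 * n by ring, Real.sqrt_mul (by positivity),
      Real.sqrt_sq hn0.le]
  have hs3' : Real.sqrt ((((n+1):ℕ):ℝ)^3) = ((n:ℝ)+1) * Real.sqrt ((n:ℝ)+1) := by
    push_cast
    rw [show (((n:ℝ)+1)^3) = ((n:ℝ)+1)^2 * ((n:ℝ)+1) by ring, Real.sqrt_mul (by positivity),
      Real.sqrt_sq (by linarith)]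
  have key : ((n:ℝ)+1)*((n:ℝ)+2) * Real.sqrt ((n:ℝ)+1) ≤ (n:ℝ)*((n:ℝ)+5) * Real.sqrt n := by
    have hpoly : (((n:ℝ)+1)*((n:ℝ)+2))^2 * ((n:ℝ)+1) ≤ ((n:ℝ)*((n:ℝ)+5))^2 * n := by
      nlinarith [hn3, sq_nonneg ((n:ℝ)-3), sq_nonneg (n:ℝ)]
    have h1 : (((n:ℝ)+1)*((n:ℝ)+2) * Real.sqrt ((n:ℝ)+1))^2 ≤ ((n:ℝ)*((n:ℝ)+5) * Real.sqrt n)^2 := by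
      have e1 : (((n:ℝ)+1)*((n:ℝ)+2) * Real.sqrt ((n:ℝ)+1))^2
          = (((n:ℝ)+1)*((n:ℝ)+2))^2 * ((n:ℝ)+1) := by rw [mul_pow, hy2]
      have e2 : ((n:ℝ)*((n:ℝ)+5) * Real.sqrt n)^2 = ((n:ℝ)*((n:ℝ)+5))^2 * (n:ℝ) := by
        rw [mul_pow, hx2]
      rw [e1, e2]; exact hpoly
    exact (pow_le_pow_iff_left₀ (by positivity) (by positivity) two_ne_zero).1 h1
  have hky : ((n:ℝ)+1)*((n:ℝ)+2) * Real.sqrt ((n:ℝ)+1) * Real.sqrt ((n:ℝ)+1)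
      ≤ (n:ℝ)*((n:ℝ)+5) * Real.sqrt n * Real.sqrt ((n:ℝ)+1) :=
    mul_le_mul_of_nonneg_right key hy.le
  rw [U, U, t, hs3, hs3']
  have hc : (((n+1:ℕ)):ℝ) + 1 = (n:ℝ) + 2 := by push_cast; ring
  rw [hc, show ((n+1:ℕ)) = n+1 from rfl]
  push_cast
  rw [div_add_div _ _ (by positivity) (by positivity), div_le_div_iff₀ (by positivity) (by positivity)]
  have hP4 : ((4:ℝ))^(n+1+1) = 4 * 4^(n+1) := by ring
  rw [hP4]
  nlinarith [mul_le_mul_of_nonneg_left hky hP.le, hyy, hxx, hx.le, hy.le, hP,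
    mul_pos (mul_pos hP hx) hy]

lemma sqrt2_bounds : (1.414:ℝ) ≤ Real.sqrt 2 ∧ Real.sqrt 2 ≤ 1.415 := by
  constructor
  · nlinarith [Real.sq_sqrt (show (0:ℝ) ≤ 2 by norm_num), Real.sqrt_nonneg 2]
  · nlinarith [Real.sq_sqrt (show (0:ℝ) ≤ 2 by norm_num), Real.sqrt_nonneg 2]

lemma sqrt3_bounds : (1.732:ℝ) ≤ Real.sqrt 3 ∧ Real.sqrt 3 ≤ 1.7321 := by
  constructor
  · nlinarith [Real.sq_sqrt (show (0:ℝ) ≤ 3 by norm_num), Real.sqrt_nonneg 3]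
  · nlinarith [Real.sq_sqrt (show (0:ℝ) ≤ 3 by norm_num), Real.sqrt_nonneg 3]

lemma sum_t_le (n : ℕ) (hn : 1 ≤ n) : ∑ k ∈ Finset.Icc 1 n, t k ≤ U n := by
  have base3 : ∑ k ∈ Finset.Icc 1 3, t k ≤ U 3 := by
    have h2 := sqrt2_bounds
    have h3 := sqrt3_bounds
    have hs2 : (0:ℝ) < Real.sqrt 2 := by nlinarith [h2.1]
    have hs3 : (0:ℝ) < Real.sqrt 3 := by nlinarith [h3.1]
    have e27 : Real.sqrt (((3:ℕ):ℝ)^3) = 3 * Real.sqrt 3 := by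
      norm_num
      rw [show (27:ℝ) = 3^2 * 3 by norm_num, Real.sqrt_mul (by positivity),
        Real.sqrt_sq (by norm_num)]
    have hIcc : Finset.Icc 1 3 = ({1, 2, 3} : Finset ℕ) := rfl
    rw [hIcc]
    rw [Finset.sum_insert (by decide), Finset.sum_insert (by decide), Finset.sum_singleton]
    have e1 : t 1 = 2 := by rw [t]; norm_num [Real.sqrt_one]
    have e2 : t 2 ≤ 3.78 := by
      rw [t]
      norm_num
      rw [div_le_iff₀ (by positivity)]
      nlinarith [h2.1]
    have e3 : t 3 ≤ 9.3 := by
      rw [t]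
      norm_num
      rw [div_le_iff₀ (by positivity)]
      nlinarith [h3.1]
    have eU : (15.08:ℝ) ≤ U 3 := by
      rw [U, e27]
      rw [le_div_iff₀ (by positivity)]
      nlinarith [h3.2]
    linarith
  rcases lt_or_ge n 3 with h | h
  · interval_cases n
    · -- n = 1
      have : Finset.Icc 1 1 = ({1} : Finset ℕ) := rfl
      rw [this, Finset.sum_singleton, t, U]
      norm_num [Real.sqrt_one]
    · -- n = 2
      have h2 := sqrt2_bounds
      have hs2 : (0:ℝ) < Real.sqrt 2 := by nlinarith [h2.1]
      have e8 : Real.sqrt (((2:ℕ):ℝ)^3) = 2 * Real.sqrt 2 := by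
        norm_num
        rw [show (8:ℝ) = 2^2 * 2 by norm_num, Real.sqrt_mul (by positivity),
          Real.sqrt_sq (by norm_num)]
      have : Finset.Icc 1 2 = ({1, 2} : Finset ℕ) := rfl
      rw [this, Finset.sum_insert (by decide), Finset.sum_singleton]
      have e1 : t 1 = 2 := by rw [t]; norm_num [Real.sqrt_one]
      have e2 : t 2 ≤ 3.78 := by
        rw [t]
        norm_num
        rw [div_le_iff₀ (by positivity)]
        nlinarith [h2.1]
      have eU : (5.78:ℝ) ≤ U 2 := by
        rw [U, e8]
        rw [le_div_iff₀ (by positivity)]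
        nlinarith [h2.2]
      linarith
  · induction n, h using Nat.le_induction with
    | base => exact base3
    | succ n hn3 ih =>
      rw [Finset.sum_Icc_succ_top (by omega)]
      have := step n hn3
      have ih' := ih (by omega)
      linarith

lemma C_lt (k : ℕ) (hk : 1 ≤ k) : C k < (1 / Real.sqrt π) * t k := by
  have ha := aseq_lt k hk
  have hk0 : (0:ℝ) < k := by exact_mod_cast hk
  have hx : (0:ℝ) < Real.sqrt k := Real.sqrt_pos.2 hk0
  have hsp : (0:ℝ) < Real.sqrt π := Real.sqrt_pos.2 Real.pi_pos
  rw [aseq, Nat.centralBinom_eq_two_mul_choose] at ha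
  rw [div_lt_div_iff₀ (by positivity) hsp] at ha
  have hk1 : (0:ℝ) < (k:ℝ) + 1 := by linarith
  have ht : (1 / Real.sqrt π) * t k = 4^k / (Real.sqrt π * (((k:ℝ)+1) * Real.sqrt k)) := by
    rw [t, div_mul_div_comm, one_mul]
  rw [C, ht, div_lt_div_iff₀ hk1 (by positivity)]
  nlinarith [mul_lt_mul_of_pos_right ha hk1]

theorem stmt6 (n : ℕ) (hn : 1 ≤ n) : S n < 4 ^ (n + 1) / (3 * Real.sqrt (π * (n : ℝ) ^ 3)) := by
  have hsp : (0:ℝ) < Real.sqrt π := Real.sqrt_pos.2 Real.pi_pos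
  have h1 : S n < (1 / Real.sqrt π) * ∑ k ∈ Finset.Icc 1 n, t k := by
    rw [S, Finset.mul_sum]
    apply Finset.sum_lt_sum_of_nonempty ⟨1, Finset.mem_Icc.2 ⟨le_refl 1, hn⟩⟩
    intro k hk
    exact C_lt k (Finset.mem_Icc.1 hk).1
  have h2 : (1 / Real.sqrt π) * ∑ k ∈ Finset.Icc 1 n, t k ≤ (1 / Real.sqrt π) * U n :=
    mul_le_mul_of_nonneg_left (sum_t_le n hn) (by positivity)
  have hU : (1 / Real.sqrt π) * U n = 4 ^ (n + 1) / (3 * Real.sqrt (π * (n : ℝ) ^ 3)) := by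
    rw [U, Real.sqrt_mul Real.pi_pos.le, div_mul_div_comm, one_mul]
    ring_nf
  linarith [h1.trans_le h2, hU.le, hU.ge]
end

section
/- For every integer n ≥ 13, the sum S_n of the first n Catalan numbers satisfies 2·S_n + 4·S_{n-1} < 3·u(n), where u(n) = 4^{n+1}/(3√(π n^3)). -/
open Real Filter

open Topology

noncomputable def dd (k : ℕ) : ℝ := (Nat.choose (2 * k) k : ℝ) ^ 2 * (4 * k + 1) / 16 ^ k

lemma dd_eq (k : ℕ) : dd k = ((4 * (k:ℝ) + 1) / (2 * k + 1)) / Real.Wallis.W k := by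
  have hW := Real.Wallis.W_eq_factorial_ratio k
  have hk : k ≤ 2 * k := by omega
  have hfacn : (2 * k).factorial = Nat.choose (2 * k) k * k.factorial * k.factorial := by
    rw [← Nat.choose_mul_factorial_mul_factorial hk]
    congr 2
    omega
  have hfac : ((2 * k).factorial : ℝ) = (Nat.choose (2 * k) k : ℝ) * (k.factorial : ℝ) * (k.factorial : ℝ) := by
    exact_mod_cast congrArg (Nat.cast (R := ℝ)) hfacn
  have h16 : (16 : ℝ) ^ k = 2 ^ (4 * k) := by
    rw [show (16:ℝ) = 2 ^ 4 by norm_num, ← pow_mul]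
  have hfne : (k.factorial : ℝ) ≠ 0 := by positivity
  have h2k : (2 * (k:ℝ) + 1) ≠ 0 := by positivity
  rw [dd, hW, hfac, h16]
  push_cast
  field_simp

lemma dd_tendsto : Tendsto dd atTop (𝓝 (4 / π)) := by
  have hden : Tendsto (fun k : ℕ => (2:ℝ) * k + 1) atTop atTop := by
    apply Filter.tendsto_atTop_add_const_right
    exact tendsto_natCast_atTop_atTop.const_mul_atTop two_pos
  have hinv : Tendsto (fun k : ℕ => ((2:ℝ) * k + 1)⁻¹) atTop (𝓝 0) := hden.inv_tendsto_atTop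
  have hnum : Tendsto (fun k : ℕ => (4 * (k:ℝ) + 1) / (2 * k + 1)) atTop (𝓝 2) := by
    have heq : ∀ k : ℕ, (4 * (k:ℝ) + 1) / (2 * k + 1) = 2 - ((2:ℝ) * k + 1)⁻¹ := by
      intro k
      have : (2 * (k:ℝ) + 1) ≠ 0 := by positivity
      field_simp
      ring
    simp only [heq]
    simpa using tendsto_const_nhds.sub hinv
  have := hnum.div Real.Wallis.tendsto_W_nhds_pi_div_two (by positivity : (π/2 : ℝ) ≠ 0)
  have h24 : (2 : ℝ) / (π / 2) = 4 / π := by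
    rw [div_div_eq_mul_div]; norm_num
  rw [← h24]
  refine this.congr fun k => ?_
  rw [dd_eq k]
  rfl

lemma dd_mono : Monotone dd := by
  apply monotone_nat_of_le_succ
  intro k
  have hcb := Nat.succ_mul_centralBinom_succ k
  have hcb' : ((k:ℝ) + 1) * (Nat.choose (2 * (k+1)) (k+1) : ℝ) = 2 * (2 * k + 1) * (Nat.choose (2 * k) k : ℝ) := by
    exact_mod_cast congrArg (Nat.cast (R := ℝ)) hcb
  set B := (Nat.choose (2 * k) k : ℝ) with hB
  set B' := (Nat.choose (2 * (k+1)) (k+1) : ℝ) with hB'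
  have hBpos : (0:ℝ) ≤ B := by positivity
  have hq : 16 * B ^ 2 * (4 * (k:ℝ) + 1) ≤ B' ^ 2 * (4 * (k:ℝ) + 5) := by
    have hsq : (((k:ℝ) + 1) * B') ^ 2 = (2 * (2 * k + 1) * B) ^ 2 := by rw [hcb']
    have hk0 : (0:ℝ) ≤ (k:ℝ) := Nat.cast_nonneg k
    nlinarith [sq_nonneg B, sq_nonneg B', mul_nonneg (sq_nonneg B) hk0]
  show dd k ≤ dd (k+1)
  rw [dd, dd, div_le_div_iff₀ (by positivity) (by positivity)]
  push_cast
  have hT : (0:ℝ) < 16 ^ k := by positivity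
  calc B ^ 2 * (4 * (k:ℝ) + 1) * 16 ^ (k+1) = (16 * B ^ 2 * (4 * (k:ℝ) + 1)) * 16 ^ k := by ring
    _ ≤ (B' ^ 2 * (4 * (k:ℝ) + 5)) * 16 ^ k := by
        exact mul_le_mul_of_nonneg_right hq hT.le
    _ = B' ^ 2 * (4 * ((k:ℝ) + 1) + 1) * 16 ^ k := by ring

lemma dd_le (k : ℕ) : dd k ≤ 4 / π := dd_mono.ge_of_tendsto dd_tendsto k

lemma binom_sqrt_bound (k : ℕ) :
    (Nat.choose (2 * k) k : ℝ) * Real.sqrt (π * (4 * k + 1)) ≤ 2 * 4 ^ k := by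
  set B := (Nat.choose (2 * k) k : ℝ) with hB
  have hBpos : (0:ℝ) ≤ B := by positivity
  have h1 : B ^ 2 * (4 * (k:ℝ) + 1) ≤ 4 / π * 16 ^ k := by
    have := dd_le k
    rw [dd, div_le_iff₀ (by positivity : (0:ℝ) < 16 ^ k)] at this
    exact this
  have h2 : B ^ 2 * (π * (4 * (k:ℝ) + 1)) ≤ 4 * 16 ^ k := by
    rw [div_mul_eq_mul_div, le_div_iff₀ pi_pos] at h1
    nlinarith [h1]
  have hargs : (0:ℝ) ≤ π * (4 * (k:ℝ) + 1) := by positivity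
  have hlhs : (0:ℝ) ≤ B * Real.sqrt (π * (4 * k + 1)) := by positivity
  have hsq : (B * Real.sqrt (π * (4 * k + 1))) ^ 2 ≤ (2 * 4 ^ k) ^ 2 := by
    rw [mul_pow, Real.sq_sqrt hargs]
    calc B ^ 2 * (π * (4 * (k:ℝ) + 1)) ≤ 4 * 16 ^ k := h2
      _ = (2 * 4 ^ k) ^ 2 := by
          have h16 : (16:ℝ) ^ k = (4 ^ k) ^ 2 := by
            rw [show (16:ℝ) = 4 ^ 2 by norm_num]; exact pow_right_comm 4 2 k
          rw [h16]; ring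
  calc B * Real.sqrt (π * (4 * k + 1)) = Real.sqrt ((B * Real.sqrt (π * (4 * k + 1))) ^ 2) := (Real.sqrt_sq hlhs).symm
    _ ≤ Real.sqrt ((2 * 4 ^ k) ^ 2) := Real.sqrt_le_sqrt hsq
    _ = 2 * 4 ^ k := Real.sqrt_sq (by positivity)

lemma key_ineq (x : ℝ) (hx : 13 ≤ x) :
    8 * x * (16 * x + 5) / ((x + 2) * (16 * x + 15)) + 4 * x * (8 * x + 4) / ((x + 1) * (8 * x + 5)) + 4
      ≤ 160 * x ^ 2 / (10 * x ^ 2 + 15 * x + 4) := by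
  have hx0 : (0:ℝ) < x := by linarith
  have d1 : (0:ℝ) < (x + 2) * (16 * x + 15) := by nlinarith
  have d2 : (0:ℝ) < (x + 1) * (8 * x + 5) := by nlinarith
  have d3 : (0:ℝ) < 10 * x ^ 2 + 15 * x + 4 := by nlinarith
  rw [div_add_div _ _ d1.ne' d2.ne', div_add' _ _ _ (mul_pos d1 d2).ne',
    div_le_div_iff₀ (mul_pos d1 d2) d3]
  have h13 : (0:ℝ) ≤ x - 13 := by linarith
  nlinarith [pow_nonneg h13 2, pow_nonneg h13 3, pow_nonneg h13 4, pow_nonneg h13 5, h13]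

lemma S_succ (m : ℕ) : S (m + 1) = S m + C (m + 1) := by
  rw [S, S, Finset.sum_Icc_succ_top (by omega : 1 ≤ m + 1)]

lemma base_case : 2 * S 13 + 4 * S 12 < 3 * u 13 := by
  have c1 : Nat.centralBinom 1 = 2 := by decide
  have c2 : Nat.centralBinom 2 = 6 := by decide
  have c3 : Nat.centralBinom 3 = 20 := by
    have h := Nat.succ_mul_centralBinom_succ 2
    norm_num [c2] at h; omega
  have c4 : Nat.centralBinom 4 = 70 := by
    have h := Nat.succ_mul_centralBinom_succ 3
    norm_num [c3] at h; omega
  have c5 : Nat.centralBinom 5 = 252 := by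
    have h := Nat.succ_mul_centralBinom_succ 4
    norm_num [c4] at h; omega
  have c6 : Nat.centralBinom 6 = 924 := by
    have h := Nat.succ_mul_centralBinom_succ 5
    norm_num [c5] at h; omega
  have c7 : Nat.centralBinom 7 = 3432 := by
    have h := Nat.succ_mul_centralBinom_succ 6
    norm_num [c6] at h; omega
  have c8 : Nat.centralBinom 8 = 12870 := by
    have h := Nat.succ_mul_centralBinom_succ 7
    norm_num [c7] at h; omega
  have c9 : Nat.centralBinom 9 = 48620 := by
    have h := Nat.succ_mul_centralBinom_succ 8
    norm_num [c8] at h; omega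
  have c10 : Nat.centralBinom 10 = 184756 := by
    have h := Nat.succ_mul_centralBinom_succ 9
    norm_num [c9] at h; omega
  have c11 : Nat.centralBinom 11 = 705432 := by
    have h := Nat.succ_mul_centralBinom_succ 10
    norm_num [c10] at h; omega
  have c12 : Nat.centralBinom 12 = 2704156 := by
    have h := Nat.succ_mul_centralBinom_succ 11
    norm_num [c11] at h; omega
  have c13 : Nat.centralBinom 13 = 10400600 := by
    have h := Nat.succ_mul_centralBinom_succ 12
    norm_num [c12] at h; omega
  have hS1 : S 1 = 1 := by
    rw [S]
    norm_num [Finset.Icc_self, C, show Nat.choose 2 1 = 2 from rfl]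
  have hS2 : S 2 = 3 := by
    rw [show S 2 = S (1 + 1) from rfl, S_succ, hS1, C,
      show Nat.choose (2 * (1 + 1)) (1 + 1) = Nat.centralBinom 2 from rfl, c2]
    norm_num
  have hS3 : S 3 = 8 := by
    rw [show S 3 = S (2 + 1) from rfl, S_succ, hS2, C,
      show Nat.choose (2 * (2 + 1)) (2 + 1) = Nat.centralBinom 3 from rfl, c3]
    norm_num
  have hS4 : S 4 = 22 := by
    rw [show S 4 = S (3 + 1) from rfl, S_succ, hS3, C,
      show Nat.choose (2 * (3 + 1)) (3 + 1) = Nat.centralBinom 4 from rfl, c4]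
    norm_num
  have hS5 : S 5 = 64 := by
    rw [show S 5 = S (4 + 1) from rfl, S_succ, hS4, C,
      show Nat.choose (2 * (4 + 1)) (4 + 1) = Nat.centralBinom 5 from rfl, c5]
    norm_num
  have hS6 : S 6 = 196 := by
    rw [show S 6 = S (5 + 1) from rfl, S_succ, hS5, C,
      show Nat.choose (2 * (5 + 1)) (5 + 1) = Nat.centralBinom 6 from rfl, c6]
    norm_num
  have hS7 : S 7 = 625 := by
    rw [show S 7 = S (6 + 1) from rfl, S_succ, hS6, C,
      show Nat.choose (2 * (6 + 1)) (6 + 1) = Nat.centralBinom 7 from rfl, c7]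
    norm_num
  have hS8 : S 8 = 2055 := by
    rw [show S 8 = S (7 + 1) from rfl, S_succ, hS7, C,
      show Nat.choose (2 * (7 + 1)) (7 + 1) = Nat.centralBinom 8 from rfl, c8]
    norm_num
  have hS9 : S 9 = 6917 := by
    rw [show S 9 = S (8 + 1) from rfl, S_succ, hS8, C,
      show Nat.choose (2 * (8 + 1)) (8 + 1) = Nat.centralBinom 9 from rfl, c9]
    norm_num
  have hS10 : S 10 = 23713 := by
    rw [show S 10 = S (9 + 1) from rfl, S_succ, hS9, C,
      show Nat.choose (2 * (9 + 1)) (9 + 1) = Nat.centralBinom 10 from rfl, c10]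
    norm_num
  have hS11 : S 11 = 82499 := by
    rw [show S 11 = S (10 + 1) from rfl, S_succ, hS10, C,
      show Nat.choose (2 * (10 + 1)) (10 + 1) = Nat.centralBinom 11 from rfl, c11]
    norm_num
  have hS12 : S 12 = 290511 := by
    rw [show S 12 = S (11 + 1) from rfl, S_succ, hS11, C,
      show Nat.choose (2 * (11 + 1)) (11 + 1) = Nat.centralBinom 12 from rfl, c12]
    norm_num
  have hS13 : S 13 = 1033411 := by
    rw [show S 13 = S (12 + 1) from rfl, S_succ, hS12, C,
      show Nat.choose (2 * (12 + 1)) (12 + 1) = Nat.centralBinom 13 from rfl, c13]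
    norm_num
  have hsq : Real.sqrt (π * 2197) < 83.13 := by
    rw [Real.sqrt_lt' (by norm_num : (0:ℝ) < 83.13)]
    nlinarith [Real.pi_lt_d6]
  have hsqpos : 0 < Real.sqrt (π * 2197) := Real.sqrt_pos.mpr (by positivity)
  have hu13 : 3 * u 13 = 4 ^ 14 / Real.sqrt (π * 2197) := by
    rw [u, show ((13:ℕ):ℝ) ^ 3 = 2197 by norm_num, show (13:ℕ) + 1 = 14 from rfl]
    field_simp
  rw [hS13, hS12, hu13, lt_div_iff₀ hsqpos]
  nlinarith [hsq, hsqpos]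

lemma step_s9 (n : ℕ) (hn : 13 ≤ n) : 2 * C (n + 1) + 4 * C n + 3 * u n ≤ 3 * u (n + 1) := by
  have hN : (13:ℝ) ≤ (n:ℝ) := by exact_mod_cast hn
  set N : ℝ := (n:ℝ) with hNdef
  have hN0 : (0:ℝ) < N := by linarith
  set s : ℝ := Real.sqrt N with hsdef
  have hs : 0 < s := Real.sqrt_pos.mpr hN0
  have hs2 : s ^ 2 = N := Real.sq_sqrt hN0.le
  have hp : 0 < Real.sqrt π := Real.sqrt_pos.mpr pi_pos
  set P : ℝ := Real.sqrt π with hPdef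
  set B : ℝ := (Nat.choose (2 * n) n : ℝ) with hBdef
  set B' : ℝ := (Nat.choose (2 * (n+1)) (n+1) : ℝ) with hB'def
  have hBpos : (0:ℝ) ≤ B := by positivity
  have hB'pos : (0:ℝ) ≤ B' := by positivity
  -- sqrt lower bounds
  have hE : 2 * s * ((8 * N + 5) / (8 * N + 4)) ≤ Real.sqrt (4 * N + 1) := by
    rw [Real.le_sqrt (by positivity) (by positivity)]
    rw [mul_pow, mul_pow, hs2, div_pow, ← mul_div_assoc, div_le_iff₀ (by positivity)]
    nlinarith
  have hF : 2 * s * ((16 * N + 15) / (16 * N + 5)) ≤ Real.sqrt (4 * (N + 1) + 1) := by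
    rw [Real.le_sqrt (by positivity) (by positivity)]
    rw [mul_pow, mul_pow, hs2, div_pow, ← mul_div_assoc, div_le_iff₀ (by positivity)]
    nlinarith
  have hA : Real.sqrt ((N + 1) ^ 3) ≤ s ^ 3 * ((10 * N ^ 2 + 15 * N + 4) / (10 * N ^ 2)) := by
    have hrhs : (0:ℝ) ≤ s ^ 3 * ((10 * N ^ 2 + 15 * N + 4) / (10 * N ^ 2)) := by positivity
    rw [show s ^ 3 * ((10 * N ^ 2 + 15 * N + 4) / (10 * N ^ 2)) =
        Real.sqrt ((s ^ 3 * ((10 * N ^ 2 + 15 * N + 4) / (10 * N ^ 2))) ^ 2) from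
      (Real.sqrt_sq hrhs).symm]
    apply Real.sqrt_le_sqrt
    have hs6 : (s ^ 3) ^ 2 = N ^ 3 := by
      rw [← pow_mul, show 3 * 2 = 2 * 3 from rfl, pow_mul, hs2]
    rw [mul_pow, hs6, div_pow, ← mul_div_assoc, le_div_iff₀ (by positivity)]
    nlinarith
  -- combined binomial bounds
  have hbB : B * (P * (2 * s * ((8 * N + 5) / (8 * N + 4)))) ≤ 2 * 4 ^ n := by
    calc B * (P * (2 * s * ((8 * N + 5) / (8 * N + 4))))
        ≤ B * (P * Real.sqrt (4 * N + 1)) := by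
          apply mul_le_mul_of_nonneg_left _ hBpos
          exact mul_le_mul_of_nonneg_left hE hp.le
      _ = B * Real.sqrt (π * (4 * N + 1)) := by rw [← Real.sqrt_mul pi_pos.le]
      _ ≤ 2 * 4 ^ n := binom_sqrt_bound n
  have hbB' : B' * (P * (2 * s * ((16 * N + 15) / (16 * N + 5)))) ≤ 2 * 4 ^ (n + 1) := by
    calc B' * (P * (2 * s * ((16 * N + 15) / (16 * N + 5))))
        ≤ B' * (P * Real.sqrt (4 * (N + 1) + 1)) := by
          apply mul_le_mul_of_nonneg_left _ hB'pos
          exact mul_le_mul_of_nonneg_left hF hp.le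
      _ = B' * Real.sqrt (π * (4 * ((n+1):ℕ) + 1)) := by
          rw [← Real.sqrt_mul pi_pos.le]; push_cast; ring_nf; rfl
      _ ≤ 2 * 4 ^ (n + 1) := binom_sqrt_bound (n + 1)
  -- rewrite u
  have hsqrtN3 : Real.sqrt (π * N ^ 3) = P * s ^ 3 := by
    rw [Real.sqrt_mul pi_pos.le, ← hPdef]
    congr 1
    rw [show N ^ 3 = (s ^ 3) ^ 2 by rw [← pow_mul, show 3 * 2 = 2 * 3 from rfl, pow_mul, hs2]]
    exact Real.sqrt_sq (by positivity)
  have hu : 3 * u n = 4 ^ (n + 1) / (P * s ^ 3) := by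
    rw [u, hsqrtN3]
    field_simp
  have hu' : 4 ^ (n + 2) / (P * (s ^ 3 * ((10 * N ^ 2 + 15 * N + 4) / (10 * N ^ 2)))) ≤ 3 * u (n + 1) := by
    have h3u : 3 * u (n + 1) = 4 ^ (n + 2) / (P * Real.sqrt ((N + 1) ^ 3)) := by
      rw [u]
      rw [show ((n+1:ℕ):ℝ) ^ 3 = (N + 1) ^ 3 by push_cast; ring]
      rw [Real.sqrt_mul pi_pos.le, ← hPdef]
      rw [show (n + 1) + 1 = n + 2 from rfl]
      field_simp
    rw [h3u]
    apply div_le_div_of_nonneg_left (by positivity) (by positivity)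
    calc P * Real.sqrt ((N + 1) ^ 3) ≤ P * (s ^ 3 * ((10 * N ^ 2 + 15 * N + 4) / (10 * N ^ 2))) :=
      mul_le_mul_of_nonneg_left hA hp.le
      _ = _ := by ring
  -- term bounds
  have hY : (0:ℝ) < 4 ^ n / (P * s ^ 3) := div_pos (by positivity) (mul_pos hp (pow_pos hs 3))
  have hD1 : (0:ℝ) < P * (2 * s * ((16 * N + 15) / (16 * N + 5))) :=
    mul_pos hp (mul_pos (by linarith) (div_pos (by linarith) (by linarith)))
  have hD2 : (0:ℝ) < P * (2 * s * ((8 * N + 5) / (8 * N + 4))) :=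
    mul_pos hp (mul_pos (by linarith) (div_pos (by linarith) (by linarith)))
  have t1 : 2 * (B' / (N + 2)) ≤ (4 ^ n / (P * s ^ 3)) * (8 * N * (16 * N + 5) / ((N + 2) * (16 * N + 15))) := by
    have h1 : B' ≤ 2 * 4 ^ (n + 1) / (P * (2 * s * ((16 * N + 15) / (16 * N + 5)))) :=
      (le_div_iff₀ hD1).mpr hbB'
    calc 2 * (B' / (N + 2))
        ≤ 2 * ((2 * 4 ^ (n + 1) / (P * (2 * s * ((16 * N + 15) / (16 * N + 5))))) / (N + 2)) := by
          apply mul_le_mul_of_nonneg_left _ (by norm_num : (0:ℝ) ≤ 2)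
          exact (div_le_div_iff_of_pos_right (by linarith : (0:ℝ) < N + 2)).mpr h1
      _ = (4 ^ n / (P * s ^ 3)) * (8 * N * (16 * N + 5) / ((N + 2) * (16 * N + 15))) := by
          rw [← hs2]
          field_simp
          ring
  have t2 : 4 * (B / (N + 1)) ≤ (4 ^ n / (P * s ^ 3)) * (4 * N * (8 * N + 4) / ((N + 1) * (8 * N + 5))) := by
    have h1 : B ≤ 2 * 4 ^ n / (P * (2 * s * ((8 * N + 5) / (8 * N + 4)))) :=
      (le_div_iff₀ hD2).mpr hbB
    calc 4 * (B / (N + 1))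
        ≤ 4 * ((2 * 4 ^ n / (P * (2 * s * ((8 * N + 5) / (8 * N + 4))))) / (N + 1)) := by
          apply mul_le_mul_of_nonneg_left _ (by norm_num : (0:ℝ) ≤ 4)
          exact (div_le_div_iff_of_pos_right (by linarith : (0:ℝ) < N + 1)).mpr h1
      _ = (4 ^ n / (P * s ^ 3)) * (4 * N * (8 * N + 4) / ((N + 1) * (8 * N + 5))) := by
          rw [← hs2]
          field_simp
  calc 2 * C (n + 1) + 4 * C n + 3 * u n
      = 2 * (B' / (N + 2)) + 4 * (B / (N + 1)) + (4 ^ n / (P * s ^ 3)) * 4 := by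
        rw [C, C, hu, hB'def, hBdef, hNdef]
        push_cast
        ring
    _ ≤ (4 ^ n / (P * s ^ 3)) * (8 * N * (16 * N + 5) / ((N + 2) * (16 * N + 15)))
        + (4 ^ n / (P * s ^ 3)) * (4 * N * (8 * N + 4) / ((N + 1) * (8 * N + 5)))
        + (4 ^ n / (P * s ^ 3)) * 4 := by linarith
    _ = (4 ^ n / (P * s ^ 3)) * (8 * N * (16 * N + 5) / ((N + 2) * (16 * N + 15))
        + 4 * N * (8 * N + 4) / ((N + 1) * (8 * N + 5)) + 4) := by ring
    _ ≤ (4 ^ n / (P * s ^ 3)) * (160 * N ^ 2 / (10 * N ^ 2 + 15 * N + 4)) :=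
        mul_le_mul_of_nonneg_left (key_ineq N hN) hY.le
    _ = 4 ^ (n + 2) / (P * (s ^ 3 * ((10 * N ^ 2 + 15 * N + 4) / (10 * N ^ 2)))) := by
        rw [← hs2]
        field_simp
        ring
    _ ≤ 3 * u (n + 1) := hu'

theorem stmt9 (n : ℕ) (hn : 13 ≤ n) : 2 * S n + 4 * S (n - 1) < 3 * u n := by
  induction n, hn using Nat.le_induction with
  | base =>
    have h : (13:ℕ) - 1 = 12 := rfl
    rw [h]
    exact base_case
  | succ m hm ih =>
    have hstep := step_s9 m hm
    have h1 : S (m + 1) = S m + C (m + 1) := S_succ m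
    have h2 : (m + 1) - 1 = m := by omega
    have h3 : S m = S (m - 1) + C m := by
      have h4 := S_succ (m - 1)
      rw [show m - 1 + 1 = m by omega] at h4
      exact h4
    rw [h2, h1]
    linarith [hstep, ih, h3]
end

section
/- The ratio u(n)/ϑ(n) = (n+1)/n tends to 1 as n → ∞; consequently both u(n) = 4^{n+1}/(3√(π n^3)) and ϑ(n) = 4^{n+1}/(3(n+1)√(π n)) are asymptotically equal to S_n, i.e., S_n / u(n) → 1 and S_n / ϑ(n) → 1 as n → ∞. -/
open Real Filter Asymptotics

lemma central_eq (n : ℕ) (hn : 1 ≤ n) :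
    (Nat.choose (2 * n) n : ℝ) * Real.sqrt n / 4 ^ n
      = Stirling.stirlingSeq (2 * n) / Stirling.stirlingSeq n ^ 2 := by
  have hn0 : (0:ℝ) < n := by exact_mod_cast hn
  have hs : (0:ℝ) < Real.sqrt n := Real.sqrt_pos.mpr hn0
  have he : (0:ℝ) < Real.exp 1 := Real.exp_pos 1
  have hfac : ((2*n).factorial : ℝ) = (Nat.choose (2*n) n : ℝ) * ((n.factorial : ℝ) * (n.factorial : ℝ)) := by
    have := Nat.choose_mul_factorial_mul_factorial (Nat.le_mul_of_pos_left n (by norm_num) : n ≤ 2 * n)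
    rw [show 2*n - n = n by omega] at this
    push_cast [← this]
    ring
  have hfacpos : (0:ℝ) < (n.factorial : ℝ) := by exact_mod_cast n.factorial_pos
  unfold Stirling.stirlingSeq
  push_cast
  rw [hfac]
  have h1 : Real.sqrt (2 * (2 * (n:ℝ))) = 2 * Real.sqrt n := by
    rw [show (2 : ℝ) * (2 * n) = 4 * n by ring, Real.sqrt_mul (by norm_num),
      show (4:ℝ) = 2^2 by norm_num, Real.sqrt_sq (by norm_num)]
  have h2 : ((2 * (n:ℝ)) / Real.exp 1) ^ (2 * n) = 4 ^ n * (((n:ℝ) / Real.exp 1) ^ n * ((n:ℝ) / Real.exp 1) ^ n) := by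
    rw [show (2 * (n:ℝ)) / Real.exp 1 = 2 * ((n:ℝ)/Real.exp 1) by ring, mul_pow, pow_mul, pow_mul]
    ring
  have h3 : Real.sqrt n * Real.sqrt n = (n:ℝ) := Real.mul_self_sqrt hn0.le
  have hp : (0:ℝ) < ((n:ℝ) / Real.exp 1) ^ n := by positivity
  have hs2 : (0:ℝ) < Real.sqrt (2*(n:ℝ)) := Real.sqrt_pos.mpr (by positivity)
  rw [h1, h2]
  rw [div_pow, div_div, div_eq_div_iff (by positivity) (by positivity)]
  field_simp
  ring_nf
  rw [Real.sq_sqrt (by positivity : (0:ℝ) ≤ (n:ℝ)), Real.sq_sqrt (by positivity : (0:ℝ) ≤ (n:ℝ) * 2)]; ring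

/-- central binomial limit -/
lemma central_lim :
    Tendsto (fun n : ℕ => (Nat.choose (2 * n) n : ℝ) * Real.sqrt n / 4 ^ n) atTop
      (nhds (1 / Real.sqrt π)) := by
  have hπ : (0:ℝ) < Real.sqrt π := Real.sqrt_pos.mpr Real.pi_pos
  have h2 : Tendsto (fun n : ℕ => 2 * n) atTop atTop :=
    tendsto_id.const_mul_atTop' two_pos
  have hst := Stirling.tendsto_stirlingSeq_sqrt_pi
  have : Tendsto (fun n : ℕ => Stirling.stirlingSeq (2 * n) / Stirling.stirlingSeq n ^ 2)
      atTop (nhds (Real.sqrt π / Real.sqrt π ^ 2)) :=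
    (hst.comp h2).div (hst.pow 2) (by positivity)
  have heq : Real.sqrt π / Real.sqrt π ^ 2 = 1 / Real.sqrt π := by
    rw [sq]; field_simp
  rw [heq] at this
  apply this.congr'
  filter_upwards [eventually_ge_atTop 1] with n hn
  exact (central_eq n hn).symm

/-- the comparison sequence -/
noncomputable def w (k : ℕ) : ℝ := 4 ^ k / (Real.sqrt π * k * Real.sqrt k)

lemma u_eq_w (n : ℕ) : u n = (4 / 3) * w n := by
  have h : Real.sqrt (π * (n:ℝ) ^ 3) = Real.sqrt π * n * Real.sqrt n := by
    rw [show π * (n:ℝ)^3 = (π * n) * (n:ℝ)^2 by ring, Real.sqrt_mul (by positivity),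
      Real.sqrt_sq (Nat.cast_nonneg n), Real.sqrt_mul Real.pi_pos.le]
    ring
  rw [u, w, h, pow_succ, div_mul_div_comm]
  ring_nf

lemma w_pos {k : ℕ} (hk : 1 ≤ k) : 0 < w k := by
  have : (0:ℝ) < k := by exact_mod_cast hk
  unfold w; positivity

lemma w_zero : w 0 = 0 := by simp [w]

lemma u_zero : u 0 = 0 := by simp [u]

lemma w_lt_succ (i : ℕ) : w i < w (i + 1) := by
  rcases Nat.eq_zero_or_pos i with h | h
  · subst h; rw [w_zero]; exact w_pos le_rfl
  have hi : (1:ℝ) ≤ i := by exact_mod_cast h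
  have hi0 : (0:ℝ) < i := by linarith
  have key : ((i:ℝ) + 1) * Real.sqrt ((i:ℝ) + 1) < 4 * ((i:ℝ) * Real.sqrt i) := by
    have h1 : ((i:ℝ) + 1) * Real.sqrt ((i:ℝ) + 1) = Real.sqrt (((i:ℝ) + 1) ^ 3) := by
      rw [show ((i:ℝ)+1)^3 = (((i:ℝ)+1)^2) * ((i:ℝ)+1) by ring,
        Real.sqrt_mul (by positivity), Real.sqrt_sq (by positivity)]
    have h2 : 4 * ((i:ℝ) * Real.sqrt i) = Real.sqrt (16 * (i:ℝ) ^ 3) := by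
      rw [show (16:ℝ) * (i:ℝ)^3 = ((4 * (i:ℝ))^2) * (i:ℝ) by ring,
        Real.sqrt_mul (by positivity), Real.sqrt_sq (by positivity)]
      ring
    rw [h1, h2]
    have h3a : (i:ℝ) ≤ (i:ℝ)^2 := by nlinarith
    have h3b : (i:ℝ)^2 ≤ (i:ℝ)^3 := by nlinarith
    exact Real.sqrt_lt_sqrt (by positivity) (by nlinarith)
  have hsπ : (0:ℝ) < Real.sqrt π := Real.sqrt_pos.mpr Real.pi_pos
  have h4 : (0:ℝ) < (4:ℝ) ^ i := by positivity
  unfold w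
  rw [div_lt_div_iff₀ (by positivity) (by positivity), pow_succ]
  push_cast
  have hprod := mul_pos (mul_pos h4 hsπ) (sub_pos.mpr key)
  nlinarith [hprod]

lemma C_div_w : Tendsto (fun k : ℕ => C k / w k) atTop (nhds 1) := by
  have hsπ : (0:ℝ) < Real.sqrt π := Real.sqrt_pos.mpr Real.pi_pos
  have hlim : Tendsto (fun k : ℕ =>
      ((Nat.choose (2 * k) k : ℝ) * Real.sqrt k / 4 ^ k) * Real.sqrt π * ((k:ℝ) / ((k:ℝ) + 1)))
      atTop (nhds ((1 / Real.sqrt π) * Real.sqrt π * 1)) :=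
    (central_lim.mul_const _).mul (tendsto_natCast_div_add_atTop (1:ℝ))
  rw [show (1 / Real.sqrt π) * Real.sqrt π * 1 = 1 by field_simp] at hlim
  apply hlim.congr'
  filter_upwards [eventually_ge_atTop 1] with k hk
  have hk0 : (0:ℝ) < k := by exact_mod_cast hk
  have hsk : (0:ℝ) < Real.sqrt k := Real.sqrt_pos.mpr hk0
  rw [C, w]
  field_simp

lemma nat_succ_div : Tendsto (fun n : ℕ => ((n:ℝ) + 1) / n) atTop (nhds 1) := by
  have h := (tendsto_natCast_div_add_atTop (1:ℝ)).inv₀ one_ne_zero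
  rw [inv_one] at h
  exact h.congr fun n => by rw [inv_div]

lemma w_ratio : Tendsto (fun i : ℕ => w i / w (i + 1)) atTop (nhds (1/4)) := by
  have hsπ : (0:ℝ) < Real.sqrt π := Real.sqrt_pos.mpr Real.pi_pos
  have hlim : Tendsto (fun i : ℕ =>
      1 / 4 * ((((i:ℝ) + 1) / i) * Real.sqrt (((i:ℝ) + 1) / i))) atTop
      (nhds (1 / 4 * (1 * Real.sqrt 1))) :=
    tendsto_const_nhds.mul (nat_succ_div.mul nat_succ_div.sqrt)
  rw [show (1:ℝ) / 4 * (1 * Real.sqrt 1) = 1 / 4 by simp] at hlim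
  apply hlim.congr'
  filter_upwards [eventually_ge_atTop 1] with i hi
  have hi0 : (0:ℝ) < i := by exact_mod_cast hi
  have hsk : (0:ℝ) < Real.sqrt i := Real.sqrt_pos.mpr hi0
  have hsk1 : (0:ℝ) < Real.sqrt ((i:ℝ) + 1) := Real.sqrt_pos.mpr (by linarith)
  rw [Real.sqrt_div (by positivity), w, w]
  push_cast
  field_simp
  ring

lemma u_atTop : Tendsto u atTop atTop := by
  have hsπ : (0:ℝ) < Real.sqrt π := Real.sqrt_pos.mpr Real.pi_pos
  have h2 : Tendsto (fun n : ℕ => 4 / (3 * Real.sqrt π) * (2:ℝ) ^ n) atTop atTop :=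
    (tendsto_pow_atTop_atTop_of_one_lt one_lt_two).const_mul_atTop (by positivity)
  have hev : ∀ᶠ n : ℕ in atTop, ((n:ℝ)) ^ 2 ≤ (2:ℝ) ^ n := by
    have ho := isLittleO_pow_const_const_pow_of_one_lt (R := ℝ) 2 (one_lt_two)
    filter_upwards [ho.def one_pos, eventually_ge_atTop 1] with n hn hn1
    have hn0 : (0:ℝ) ≤ n := Nat.cast_nonneg n
    simpa [abs_of_nonneg, hn0, Real.norm_eq_abs, abs_of_nonneg (pow_nonneg hn0 2),
      abs_of_nonneg (pow_nonneg (by norm_num : (0:ℝ) ≤ 2) n)] using hn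
  apply tendsto_atTop_mono' _ _ h2
  filter_upwards [hev, eventually_ge_atTop 1] with n hn hn1
  have hn0 : (1:ℝ) ≤ n := by exact_mod_cast hn1
  have hnp : (0:ℝ) < n := by linarith
  have hsn : Real.sqrt n ≤ (n:ℝ) := by
    calc Real.sqrt n ≤ Real.sqrt ((n:ℝ)^2) := Real.sqrt_le_sqrt (by nlinarith)
    _ = n := Real.sqrt_sq hnp.le
  have hd : Real.sqrt π * n * Real.sqrt n ≤ Real.sqrt π * (2:ℝ)^n := by
    calc Real.sqrt π * n * Real.sqrt n ≤ Real.sqrt π * ((n:ℝ)^2) := by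
          nlinarith [mul_nonneg (mul_nonneg hsπ.le hnp.le) (sub_nonneg.mpr hsn)]
    _ ≤ Real.sqrt π * (2:ℝ)^n := by nlinarith
  rw [u_eq_w, w]
  have h4 : ((4:ℝ))^n = (2:ℝ)^n * (2:ℝ)^n := by
    rw [show (4:ℝ) = 2 * 2 by norm_num, mul_pow]
  calc 4 / (3 * Real.sqrt π) * (2:ℝ) ^ n = 4 / 3 * ((2:ℝ)^n * (2:ℝ)^n / (Real.sqrt π * (2:ℝ)^n)) := by
        field_simp
  _ ≤ 4 / 3 * ((4:ℝ) ^ n / (Real.sqrt π * (n:ℝ) * Real.sqrt n)) := by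
        rw [h4]
        have hdp : (0:ℝ) < Real.sqrt π * n * Real.sqrt n := by positivity
        gcongr

theorem stmt13 :
    (∀ n : ℕ, 1 ≤ n → u n / ϑ n = ((n : ℝ) + 1) / n) ∧
    Tendsto (fun n : ℕ => u n / ϑ n) atTop (nhds 1) ∧
    Tendsto (fun n : ℕ => S n / u n) atTop (nhds 1) ∧
    Tendsto (fun n : ℕ => S n / ϑ n) atTop (nhds 1) := by
  have hsπ : (0:ℝ) < Real.sqrt π := Real.sqrt_pos.mpr Real.pi_pos
  -- part 1
  have part1 : ∀ n : ℕ, 1 ≤ n → u n / ϑ n = ((n : ℝ) + 1) / n := by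
    intro n hn
    have hn0 : (0:ℝ) < n := by exact_mod_cast hn
    have hkey : Real.sqrt (π * (n:ℝ) ^ 3) = Real.sqrt (π * n) * n := by
      rw [show π * (n:ℝ)^3 = (π * n) * (n:ℝ)^2 by ring, Real.sqrt_mul (by positivity),
        Real.sqrt_sq hn0.le]
    have hq : (0:ℝ) < Real.sqrt (π * n) := Real.sqrt_pos.mpr (by positivity)
    have h4 : (0:ℝ) < (4:ℝ) ^ (n + 1) := by positivity
    rw [u, ϑ, hkey]
    rw [div_div_div_comm]
    rw [div_self h4.ne']
    field_simp
  refine ⟨part1, ?_⟩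
  -- part 2
  have part2 : Tendsto (fun n : ℕ => u n / ϑ n) atTop (nhds 1) := by
    apply nat_succ_div.congr'
    filter_upwards [eventually_ge_atTop 1] with n hn
    exact (part1 n hn).symm
  refine ⟨part2, ?_⟩
  -- the telescoping comparison sequence
  set f : ℕ → ℝ := fun i => u (i + 1) - u i with hf
  have hf_pos : ∀ i, 0 < f i := by
    intro i
    have := w_lt_succ i
    simp only [hf, u_eq_w]
    nlinarith [this]
  have hsum : ∀ n, ∑ i ∈ Finset.range n, f i = u n := by
    intro n
    rw [Finset.sum_range_sub u, u_zero, sub_zero]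
  have hwpos : ∀ i : ℕ, 0 < w (i + 1) := fun i => w_pos (Nat.le_add_left 1 i)
  have hfw : Tendsto (fun i : ℕ => f i / w (i + 1)) atTop (nhds 1) := by
    have hlim : Tendsto (fun i : ℕ => 4 / 3 * (1 - w i / w (i + 1))) atTop
        (nhds (4 / 3 * (1 - 1 / 4))) :=
      tendsto_const_nhds.mul (tendsto_const_nhds.sub w_ratio)
    rw [show (4:ℝ) / 3 * (1 - 1/4) = 1 by norm_num] at hlim
    apply hlim.congr
    intro i
    have hwi := (hwpos i).ne'
    simp only [hf, u_eq_w]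
    field_simp
  have hCsucc : Tendsto (fun i : ℕ => C (i + 1) / w (i + 1)) atTop (nhds 1) :=
    C_div_w.comp (tendsto_add_atTop_nat 1)
  have hCf : Tendsto (fun i : ℕ => C (i + 1) / f i) atTop (nhds 1) := by
    have := hCsucc.div hfw one_ne_zero
    rw [show (1:ℝ) / 1 = 1 by norm_num] at this
    apply this.congr
    intro i
    simp only [Pi.div_apply]
    have h1 := (hwpos i).ne'
    have h2 := (hf_pos i).ne'
    field_simp
  have hequiv : (fun i : ℕ => C (i + 1)) ~[atTop] f :=
    (isEquivalent_iff_tendsto_one (Eventually.of_forall fun i => (hf_pos i).ne')).mpr hCf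
  have h'g : Tendsto (fun n => ∑ i ∈ Finset.range n, f i) atTop atTop :=
    u_atTop.congr fun n => (hsum n).symm
  have hlo : (fun n => ∑ i ∈ Finset.range n, (C (i + 1) - f i)) =o[atTop]
      fun n => ∑ i ∈ Finset.range n, f i :=
    IsLittleO.sum_range hequiv.isLittleO (fun i => (hf_pos i).le) h'g
  have hS : ∀ n, S n = ∑ i ∈ Finset.range n, C (i + 1) := by
    intro n
    rw [S, show Finset.Icc 1 n = Finset.Ico 1 (n+1) by rw [Finset.Ico_add_one_right_eq_Icc],
      Finset.sum_Ico_eq_sum_range]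
    simp [add_comm]
  have hSu_equiv : S ~[atTop] u := by
    have : (fun n => S n - u n) =o[atTop] u := by
      apply hlo.congr'
      · apply Eventually.of_forall
        intro n
        simp only
        rw [Finset.sum_sub_distrib, hsum, ← hS]
      · exact Eventually.of_forall fun n => hsum n
    exact this
  have hu_ne : ∀ᶠ n : ℕ in atTop, u n ≠ 0 := by
    filter_upwards [eventually_ge_atTop 1] with n hn
    have := w_pos hn
    rw [u_eq_w]
    positivity
  have part3 : Tendsto (fun n : ℕ => S n / u n) atTop (nhds 1) := by
    have := (isEquivalent_iff_tendsto_one hu_ne).mp hSu_equiv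
    exact this
  refine ⟨part3, ?_⟩
  -- part 4
  have hlim := part3.mul part2
  rw [show (1:ℝ) * 1 = 1 by norm_num] at hlim
  apply hlim.congr'
  filter_upwards [eventually_ge_atTop 1, hu_ne] with n hn hu
  rw [div_mul_div_comm, mul_comm (S n) (u n), mul_div_mul_left _ _ hu]
end

section
/- For every integer n ≥ 13, the inequality 4 ≥ √((n+1)^3/n^3) + √(36(n+1)^3/((n+2)^2(4n+1))) holds. -/
open Real Filter

theorem stmt14 (n : ℕ) (hn : 13 ≤ n) :
    4 ≥ Real.sqrt (((n : ℝ) + 1) ^ 3 / (n : ℝ) ^ 3) +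
      Real.sqrt (36 * ((n : ℝ) + 1) ^ 3 / (((n : ℝ) + 2) ^ 2 * (4 * (n : ℝ) + 1))) := by
  have hx : (13:ℝ) ≤ (n:ℝ) := by exact_mod_cast hn
  set x : ℝ := (n : ℝ) with hxdef
  have hx0 : (0:ℝ) < x := by linarith
  have key : ∀ y c : ℝ, 0 ≤ c → y ≤ c ^ 2 → Real.sqrt y ≤ c := by
    intro y c hc h
    calc Real.sqrt y ≤ Real.sqrt (c ^ 2) := Real.sqrt_le_sqrt h
    _ = c := Real.sqrt_sq hc
  have hb0 : (0:ℝ) ≤ 3 - 3/(2*x) - 3/(8*x^2) := by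
    have h1 : 3/(2*x) ≤ 3/26 := by
      apply div_le_div_of_nonneg_left (by norm_num) (by norm_num) (by linarith)
    have h2 : 3/(8*x^2) ≤ 3/(8*169) := by
      apply div_le_div_of_nonneg_left (by norm_num) (by norm_num)
      nlinarith
    linarith
  have h1 : Real.sqrt ((x + 1) ^ 3 / x ^ 3) ≤ 1 + 3/(2*x) + 3/(8*x^2) := by
    apply key _ _ (by positivity)
    have heq : (1 + 3/(2*x) + 3/(8*x^2)) = (8 * x ^ 2 + 12 * x + 3) / (8 * x ^ 2) := by
      field_simp; ring
    rw [heq, div_pow, div_le_div_iff₀ (by positivity) (by positivity)]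
    nlinarith [pow_pos hx0 3, pow_pos hx0 4, hx0.le]
  have h2 : Real.sqrt (36 * (x + 1) ^ 3 / ((x + 2) ^ 2 * (4 * x + 1))) ≤
      3 - 3/(2*x) - 3/(8*x^2) := by
    apply key _ _ hb0
    rw [div_le_iff₀ (by positivity)]
    have hd : (0:ℝ) < (x + 2) ^ 2 * (4 * x + 1) := by positivity
    have h13 : (0:ℝ) ≤ x - 13 := by linarith
    have hpoly : 36 * (x + 1) ^ 3 * (64 * x ^ 4) ≤
        (24 * x ^ 2 - 12 * x - 3) ^ 2 * ((x + 2) ^ 2 * (4 * x + 1)) := by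
      nlinarith [mul_nonneg (mul_nonneg h13 (pow_pos hx0 5).le) h13,
        mul_nonneg h13 (pow_pos hx0 5).le,
        mul_nonneg h13 (pow_pos hx0 4).le,
        mul_nonneg h13 (pow_pos hx0 3).le,
        mul_nonneg h13 (pow_pos hx0 2).le,
        mul_nonneg h13 hx0.le, sq_nonneg x, pow_pos hx0 6]
    have heq : (3 - 3/(2*x) - 3/(8*x^2)) = (24 * x ^ 2 - 12 * x - 3) / (8 * x ^ 2) := by
      field_simp
      ring
    rw [heq]
    rw [div_pow, div_mul_eq_mul_div, le_div_iff₀ (by positivity)]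
    nlinarith [hpoly]
  have hsum : 1 + 3/(2*x) + 3/(8*x^2) + (3 - 3/(2*x) - 3/(8*x^2)) = 4 := by ring
  linarith [h1, h2]
end

section
/- For every integer n ≥ 2, the sums of Catalan numbers satisfy the recurrence (n+1)·S_n + (1-5n)·S_{n-1} = 2(1-2n)·S_{n-2}. -/
open Real Filter

theorem stmt17 (n : ℕ) (hn : 2 ≤ n) :
    ((n : ℝ) + 1) * S n + (1 - 5 * (n : ℝ)) * S (n - 1) = 2 * (1 - 2 * (n : ℝ)) * S (n - 2) := by
  obtain ⟨m, rfl⟩ : ∃ m, n = m + 2 := ⟨n - 2, by omega⟩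
  have h1 : m + 2 - 1 = m + 1 := rfl
  have h2 : m + 2 - 2 = m := rfl
  rw [h1, h2]
  have hS2 : S (m + 2) = S (m + 1) + C (m + 2) := by
    rw [S, S, Finset.sum_Icc_succ_top (by omega)]
  have hS1 : S (m + 1) = S m + C (m + 1) := by
    rw [S, S, Finset.sum_Icc_succ_top (by omega)]
  have hc := Nat.succ_mul_centralBinom_succ (m + 1)
  have hcast : ((m : ℝ) + 2) * (Nat.centralBinom (m + 2) : ℝ)
      = (4 * (m : ℝ) + 6) * (Nat.centralBinom (m + 1) : ℝ) := by
    have := congrArg (Nat.cast : ℕ → ℝ) hc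
    push_cast at this
    linarith
  have hC2 : C (m + 2) = (Nat.centralBinom (m + 2) : ℝ) / ((m : ℝ) + 3) := by
    simp [C, Nat.centralBinom]
    ring_nf
  have hC1 : C (m + 1) = (Nat.centralBinom (m + 1) : ℝ) / ((m : ℝ) + 2) := by
    simp [C, Nat.centralBinom]
    ring_nf
  have hm2 : ((m : ℝ) + 2) ≠ 0 := by positivity
  have hm3 : ((m : ℝ) + 3) ≠ 0 := by positivity
  have hkey : ((m : ℝ) + 3) * C (m + 2) = (4 * (m : ℝ) + 6) * C (m + 1) := by
    rw [hC2, hC1]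
    field_simp
    linarith [hcast]
  rw [hS2, hS1]
  push_cast
  linear_combination hkey
end

section
/- For every integer n ≥ 1, 2·C_{n+1} + 4·C_n = 4·C_n·(1 + (2n+1)/(n+2)) < 3·2^{2n+3} / ((n+2)·√(π(4n+1))). -/
open Real Filter Topology

noncomputable def bb (n : ℕ) : ℝ := π * (4 * n + 1) * (Nat.centralBinom n) ^ 2 / 16 ^ n

lemma cb_succ_real (n : ℕ) : (Nat.centralBinom (n + 1) : ℝ)
    = 2 * (2 * (n : ℝ) + 1) * Nat.centralBinom n / ((n : ℝ) + 1) := by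
  have hrec : ((n : ℝ) + 1) * Nat.centralBinom (n + 1) = 2 * (2 * n + 1) * Nat.centralBinom n := by
    exact_mod_cast Nat.succ_mul_centralBinom_succ n
  field_simp
  linarith

lemma bb_lt_succ (n : ℕ) : bb n < bb (n + 1) := by
  have hpos : (0 : ℝ) < Nat.centralBinom n := by exact_mod_cast Nat.centralBinom_pos n
  have hπ := pi_pos
  have hdiff : bb (n + 1) - bb n = π * (Nat.centralBinom n : ℝ) ^ 2 / (4 * ((n : ℝ) + 1) ^ 2 * 16 ^ n) := by
    unfold bb
    rw [cb_succ_real]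
    push_cast
    field_simp
    ring
  have : (0:ℝ) < π * (Nat.centralBinom n : ℝ) ^ 2 / (4 * ((n : ℝ) + 1) ^ 2 * 16 ^ n) := by positivity
  linarith

lemma fact_two_mul (n : ℕ) : ((2 * n).factorial : ℝ) = Nat.centralBinom n * n.factorial * n.factorial := by
  have := Nat.choose_mul_factorial_mul_factorial (show n ≤ 2 * n by omega)
  rw [Nat.centralBinom]
  have h2 : 2 * n - n = n := by omega
  rw [h2] at this
  exact_mod_cast this.symm

lemma stirling_ratio (n : ℕ) (hn : 1 ≤ n) :
    Stirling.stirlingSeq (2 * n) / Stirling.stirlingSeq n ^ 2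
      = Nat.centralBinom n * Real.sqrt n / 4 ^ n := by
  have hn0 : (0:ℝ) < n := by exact_mod_cast hn
  have hs : Real.sqrt (2 * (2 * n) : ℝ) = 2 * Real.sqrt n := by
    rw [show (2 * (2 * n) : ℝ) = 4 * n by push_cast; ring]
    rw [show (4 : ℝ) * n = 2^2 * n by norm_num, Real.sqrt_mul (by positivity), Real.sqrt_sq (by norm_num)]
  have hsqn : Real.sqrt (n:ℝ) > 0 := Real.sqrt_pos.mpr hn0
  have hfact : (n.factorial : ℝ) > 0 := by exact_mod_cast n.factorial_pos
  have hexp : (0:ℝ) < Real.exp 1 := Real.exp_pos 1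
  have e2 : rexp (2 * (n:ℝ)) = rexp n ^ 2 := by rw [two_mul, Real.exp_add]; ring
  unfold Stirling.stirlingSeq
  rw [fact_two_mul]
  push_cast
  rw [hs]
  rw [show (2 * (n:ℝ) / rexp 1) = 2 * ((n:ℝ) / rexp 1) by ring, mul_pow,
    show ((2:ℝ)) ^ (2 * n) = 4 ^ n by rw [pow_mul]; norm_num]
  have hp0 : (0:ℝ) < ((n:ℝ)/Real.exp 1)^n := by positivity
  field_simp
  rw [Real.sq_sqrt (by positivity), Real.sq_sqrt hn0.le]
  ring

lemma bb_tendsto : Tendsto bb atTop (𝓝 4) := by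
  have h2n : Tendsto (fun n : ℕ => 2 * n) atTop atTop :=
    tendsto_id.const_mul_atTop' two_pos
  have h1 := Stirling.tendsto_stirlingSeq_sqrt_pi.comp h2n
  have hsp : (0:ℝ) < Real.sqrt π := Real.sqrt_pos.mpr pi_pos
  have hr : Tendsto (fun n => Stirling.stirlingSeq (2 * n) / Stirling.stirlingSeq n ^ 2)
      atTop (𝓝 (Real.sqrt π / Real.sqrt π ^ 2)) :=
    h1.div (Stirling.tendsto_stirlingSeq_sqrt_pi.pow 2) (by positivity)
  have h0 : Tendsto (fun n : ℕ => ((n : ℝ))⁻¹) atTop (𝓝 0) :=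
    tendsto_natCast_atTop_atTop.inv_tendsto_atTop
  have hinv : Tendsto (fun n : ℕ => 4 + ((n : ℝ))⁻¹) atTop (𝓝 (4 + 0)) :=
    tendsto_const_nhds.add h0
  rw [add_zero] at hinv
  have hmain : Tendsto (fun n : ℕ => π * (4 + ((n:ℝ))⁻¹) *
      (Stirling.stirlingSeq (2 * n) / Stirling.stirlingSeq n ^ 2) ^ 2) atTop
      (𝓝 (π * 4 * (Real.sqrt π / Real.sqrt π ^ 2) ^ 2)) :=
    (tendsto_const_nhds.mul hinv).mul (hr.pow 2)
  have hval : π * 4 * (Real.sqrt π / Real.sqrt π ^ 2) ^ 2 = 4 := by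
    rw [Real.sq_sqrt pi_pos.le, div_pow, Real.sq_sqrt pi_pos.le]
    field_simp
  rw [hval] at hmain
  refine hmain.congr' ?_
  filter_upwards [eventually_ge_atTop 1] with n hn
  rw [stirling_ratio n hn]
  have hn0 : (0:ℝ) < n := by exact_mod_cast hn
  unfold bb
  rw [div_pow, mul_pow, Real.sq_sqrt hn0.le,
    show ((4:ℝ)^n)^2 = 16^n by rw [← pow_mul, mul_comm, pow_mul]; norm_num]
  field_simp

lemma bb_lt_four (n : ℕ) : bb n < 4 := by
  have hmono : Monotone bb := monotone_nat_of_le_succ fun k => (bb_lt_succ k).le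
  exact (bb_lt_succ n).trans_le (hmono.ge_of_tendsto bb_tendsto (n + 1))

lemma cb_sqrt_lt (n : ℕ) :
    (Nat.centralBinom n : ℝ) * Real.sqrt (π * (4 * n + 1)) < 2 * 4 ^ n := by
  have hb := bb_lt_four n
  have h16 : (0:ℝ) < 16 ^ n := by positivity
  have hπ := pi_pos
  apply lt_of_pow_lt_pow_left₀ 2 (by positivity)
  rw [mul_pow, Real.sq_sqrt (by positivity), mul_pow,
    show ((4:ℝ)^n)^2 = 16^n by rw [← pow_mul, mul_comm, pow_mul]; norm_num]
  unfold bb at hb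
  rw [div_lt_iff₀ h16] at hb
  nlinarith
theorem stmt18 (n : ℕ) (hn : 1 ≤ n) :
    2 * C (n + 1) + 4 * C n = 4 * C n * (1 + (2 * (n : ℝ) + 1) / ((n : ℝ) + 2)) ∧
    4 * C n * (1 + (2 * (n : ℝ) + 1) / ((n : ℝ) + 2)) < 3 * 2 ^ (2 * n + 3) / (((n : ℝ) + 2) * Real.sqrt (π * (4 * (n : ℝ) + 1))) := by
  have hC : ∀ k : ℕ, C k = (Nat.centralBinom k : ℝ) / ((k : ℝ) + 1) := fun k => rfl
  have hpos : (0 : ℝ) < Nat.centralBinom n := by exact_mod_cast Nat.centralBinom_pos n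
  constructor
  · rw [hC, hC, cb_succ_real]
    push_cast
    have h1 : ((n:ℝ) + 1) ≠ 0 := by positivity
    have h2 : ((n:ℝ) + 2) ≠ 0 := by positivity
    field_simp
    ring
  · have hkey := cb_sqrt_lt n
    have hsq : (0:ℝ) < Real.sqrt (π * (4 * (n:ℝ) + 1)) := Real.sqrt_pos.mpr (by positivity)
    have hLHS : 4 * C n * (1 + (2 * (n:ℝ) + 1) / ((n:ℝ) + 2))
        = 12 * Nat.centralBinom n / ((n:ℝ) + 2) := by
      rw [hC]
      field_simp
      ring
    have hRHS : 3 * (2:ℝ) ^ (2 * n + 3) = 24 * 4 ^ n := by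
      rw [pow_add, pow_mul]; norm_num; ring
    rw [hLHS, hRHS, div_lt_div_iff₀ (by positivity) (by positivity)]
    nlinarith [hkey, hsq, mul_pos hsq hpos]
end

section
/- For every integer k ≥ 1, C_k < 4^k/((k+1)·√(π k)), and moreover the bound ν(k) = 2^{2k+1}/((k+1)√(π(4k+1))) satisfies ν(k) - C_k ≤ (1/3)·(υ(k) - C_k) where υ(k) = 4^k/((k+1)√(π k)). -/
open Real Filter
open scoped Topology Nat

namespace Aux19

open Real.Wallis

lemma tendsto_ratio (a b : ℝ) (hb : 0 < b) :
    Tendsto (fun n : ℕ => ((b * n + a) / (b * n + a + 1) : ℝ)) atTop (𝓝 1) := by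
  have hd : Tendsto (fun n : ℕ => (b * n + a + 1 : ℝ)) atTop atTop := by
    apply tendsto_atTop_add_const_right
    apply tendsto_atTop_add_const_right
    exact tendsto_natCast_atTop_atTop.const_mul_atTop hb
  have h0 : Tendsto (fun n : ℕ => (1 : ℝ) / (b * n + a + 1)) atTop (𝓝 0) :=
    tendsto_const_nhds.div_atTop hd
  have heq : ∀ᶠ n : ℕ in atTop, (1 : ℝ) - 1 / (b * n + a + 1) = (b * n + a) / (b * n + a + 1) := by
    filter_upwards [hd.eventually_gt_atTop 0] with n hn
    field_simp
    ring
  have := (tendsto_const_nhds (x := (1:ℝ)) (f := atTop (α := ℕ))).sub h0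
  rw [sub_zero] at this
  exact Tendsto.congr' heq this

lemma wallis_lower (n : ℕ) : π / 2 ≤ W n * ((4 * n + 2) / (4 * n + 1)) := by
  have hanti : Antitone (fun n : ℕ => W n * ((4 * n + 2) / (4 * n + 1))) := by
    apply antitone_nat_of_succ_le
    intro n
    have hW := W_pos n
    have hn : (0:ℝ) ≤ n := Nat.cast_nonneg n
    rw [W_succ]
    push_cast
    rw [div_mul_div_comm, mul_assoc, mul_le_mul_iff_right₀ hW]
    rw [div_mul_div_comm, div_le_div_iff₀ (by positivity) (by positivity)]
    nlinarith [sq_nonneg ((n:ℝ))]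
  have hlim : Tendsto (fun n : ℕ => W n * ((4 * n + 2) / (4 * n + 1))) atTop (𝓝 (π / 2)) := by
    have h1 : Tendsto (fun n : ℕ => ((4 * n + 1) / (4 * n + 2) : ℝ)) atTop (𝓝 1) := by
      have := tendsto_ratio 1 4 (by norm_num)
      convert this using 2 with n
      ring_nf
    have h2 : Tendsto (fun n : ℕ => ((4 * n + 2) / (4 * n + 1) : ℝ)) atTop (𝓝 1) := by
      have := h1.inv₀ (by norm_num)
      rw [inv_one] at this
      convert this using 2 with n
      rw [inv_div]
    have := tendsto_W_nhds_pi_div_two.mul h2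
    rwa [mul_one] at this
  exact hanti.le_of_tendsto hlim n

lemma wallis_upper (n : ℕ) : W n * ((4 * n + 3) / (4 * n + 2)) ≤ π / 2 := by
  have hmono : Monotone (fun n : ℕ => W n * ((4 * n + 3) / (4 * n + 2))) := by
    apply monotone_nat_of_le_succ
    intro n
    have hW := W_pos n
    have hn : (0:ℝ) ≤ n := Nat.cast_nonneg n
    rw [W_succ]
    push_cast
    rw [div_mul_div_comm, mul_assoc, mul_le_mul_iff_right₀ hW]
    rw [div_mul_div_comm, div_le_div_iff₀ (by positivity) (by positivity)]
    nlinarith [sq_nonneg ((n:ℝ))]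
  have hlim : Tendsto (fun n : ℕ => W n * ((4 * n + 3) / (4 * n + 2))) atTop (𝓝 (π / 2)) := by
    have h1 : Tendsto (fun n : ℕ => ((4 * n + 2) / (4 * n + 3) : ℝ)) atTop (𝓝 1) := by
      have := tendsto_ratio 2 4 (by norm_num)
      convert this using 2 with n
      ring_nf
    have h2 : Tendsto (fun n : ℕ => ((4 * n + 3) / (4 * n + 2) : ℝ)) atTop (𝓝 1) := by
      have := h1.inv₀ (by norm_num)
      rw [inv_one] at this
      convert this using 2 with n
      rw [inv_div]
    have := tendsto_W_nhds_pi_div_two.mul h2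
    rwa [mul_one] at this
  exact hmono.ge_of_tendsto hlim n

lemma binom_sq_W (n : ℕ) :
    ((Nat.choose (2 * n) n : ℝ)) ^ 2 * (2 * n + 1) * W n = 16 ^ n := by
  have h2 : 2 * n - n = n := by omega
  have h := Nat.choose_mul_factorial_mul_factorial (show n ≤ 2 * n by omega)
  rw [h2] at h
  have hr : ((2 * n)! : ℝ) = (Nat.choose (2 * n) n : ℝ) * n ! * n ! := by
    exact_mod_cast h.symm
  have hc : (0:ℝ) < (Nat.choose (2 * n) n : ℝ) := by
    exact_mod_cast Nat.choose_pos (show n ≤ 2 * n by omega)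
  have hf : (0:ℝ) < (n ! : ℝ) := by exact_mod_cast Nat.factorial_pos n
  rw [W_eq_factorial_ratio]
  push_cast
  rw [hr]
  field_simp
  rw [pow_mul, show ((2:ℝ)^4) = 16 by norm_num]

lemma binom_upper (n : ℕ) (hn : 1 ≤ n) :
    (Nat.choose (2 * n) n : ℝ) < 4 ^ n / Real.sqrt (π * n) := by
  set c : ℝ := (Nat.choose (2 * n) n : ℝ) with hcdef
  have hc : (0:ℝ) < c := by
    rw [hcdef]; exact_mod_cast Nat.choose_pos (show n ≤ 2 * n by omega)
  have hq := binom_sq_W n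
  have hn1 : (1:ℝ) ≤ (n:ℝ) := by exact_mod_cast hn
  have hl : π / 2 * (4 * n + 1) ≤ W n * (4 * n + 2) := by
    have h := wallis_lower n
    rw [mul_div_assoc', le_div_iff₀ (by positivity)] at h
    linarith
  have hWn : π * n < (2 * n + 1) * W n := by nlinarith [pi_pos]
  have hQ : (0:ℝ) < Real.sqrt (π * n) := Real.sqrt_pos.mpr (by positivity)
  rw [lt_div_iff₀ hQ]
  have h4 : (0:ℝ) ≤ 4 ^ n := by positivity
  refine lt_of_pow_lt_pow_left₀ 2 h4 ?_
  have hsq : (c * Real.sqrt (π * n)) ^ 2 = c ^ 2 * (π * n) := by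
    rw [mul_pow, Real.sq_sqrt (by positivity : (0:ℝ) ≤ π * n)]
  have h16 : ((4:ℝ) ^ n) ^ 2 = 16 ^ n := by
    rw [← pow_mul, mul_comm n 2, pow_mul]; norm_num
  rw [hsq, h16, ← hq, ← hcdef]
  nlinarith [mul_pos (pow_pos hc 2) (sub_pos.mpr hWn)]

lemma binom_lower (n : ℕ) (hn : 1 ≤ n) :
    4 ^ n * Real.sqrt (4 * n + 3) / (Real.sqrt π * (2 * n + 1)) ≤
      (Nat.choose (2 * n) n : ℝ) := by
  set c : ℝ := (Nat.choose (2 * n) n : ℝ) with hcdef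
  have hc : (0:ℝ) < c := by
    rw [hcdef]; exact_mod_cast Nat.choose_pos (show n ≤ 2 * n by omega)
  have hq := binom_sq_W n
  have hn1 : (1:ℝ) ≤ (n:ℝ) := by exact_mod_cast hn
  have hu : W n * (4 * n + 3) ≤ π / 2 * (4 * n + 2) := by
    have h := wallis_upper n
    rw [mul_div_assoc', div_le_iff₀ (by positivity)] at h
    linarith
  have hW := W_pos n
  refine le_of_pow_le_pow_left₀ (two_ne_zero) hc.le ?_
  have hL : (4 ^ n * Real.sqrt (4 * n + 3) / (Real.sqrt π * (2 * n + 1))) ^ 2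
      = 16 ^ n * (4 * n + 3) / (π * (2 * n + 1) ^ 2) := by
    rw [div_pow, mul_pow, mul_pow, Real.sq_sqrt (by positivity : (0:ℝ) ≤ 4 * (n:ℝ) + 3),
      Real.sq_sqrt pi_pos.le]
    congr 2
    rw [← pow_mul, mul_comm n 2, pow_mul]; norm_num
  rw [hL, div_le_iff₀ (by positivity)]
  rw [← hq, ← hcdef]
  nlinarith [mul_nonneg (mul_nonneg (sq_nonneg c) (by positivity : (0:ℝ) ≤ 2*(n:ℝ)+1))
    (by nlinarith : (0:ℝ) ≤ π * (2*(n:ℝ)+1) - W n * (4*(n:ℝ)+3))]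

lemma key (x : ℝ) (hx : 1 ≤ x) :
    6 / Real.sqrt (4 * x + 1) ≤ 1 / Real.sqrt x + 2 * Real.sqrt (4 * x + 3) / (2 * x + 1) := by
  have hx0 : (0:ℝ) < x := lt_of_lt_of_le one_pos hx
  set s := Real.sqrt x with hsdef
  set a := Real.sqrt (4 * x + 1) with hadef
  set c := Real.sqrt (4 * x + 3) with hcdef
  have hs : 0 < s := Real.sqrt_pos.mpr hx0
  have ha : 0 < a := Real.sqrt_pos.mpr (by linarith)
  have hc : 0 < c := Real.sqrt_pos.mpr (by linarith)
  have hs2 : s ^ 2 = x := Real.sq_sqrt hx0.le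
  have ha2 : a ^ 2 = 4 * x + 1 := Real.sq_sqrt (by linarith)
  have hc2 : c ^ 2 = 4 * x + 3 := Real.sq_sqrt (by linarith)
  have hA : s * (32 * x + 6) ≤ a * (16 * x + 1) := by
    refine le_of_pow_le_pow_left₀ two_ne_zero (by positivity) ?_
    rw [mul_pow, mul_pow, hs2, ha2]
    nlinarith [hx0]
  have hC : s * (32 * x + 18) ≤ c * (16 * x + 3) := by
    refine le_of_pow_le_pow_left₀ two_ne_zero (by positivity) ?_
    rw [mul_pow, mul_pow, hs2, hc2]
    nlinarith [hx0]
  have h5 : (s * (32 * x + 6)) * (s * (32 * x + 18)) ≤ (a * (16 * x + 1)) * (c * (16 * x + 3)) :=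
    mul_le_mul hA hC (by positivity) (by positivity)
  have e5 : s * (32 * x + 6) * (s * (32 * x + 18)) = x * (32 * x + 6) * (32 * x + 18) := by
    linear_combination (32 * x + 6) * (32 * x + 18) * hs2
  rw [e5] at h5
  have hD : (0:ℝ) < (16 * x + 1) * (16 * x + 3) := by positivity
  have t1 : (0:ℝ) ≤ (a * (16 * x + 1) - s * (32 * x + 6)) * ((2 * x + 1) * (16 * x + 3)) :=
    mul_nonneg (sub_nonneg.mpr hA) (by positivity)
  have t2 : (0:ℝ) ≤ s * ((a * (16 * x + 1)) * (c * (16 * x + 3)) - x * (32 * x + 6) * (32 * x + 18)) :=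
    mul_nonneg hs.le (sub_nonneg.mpr h5)
  have t3 : (0:ℝ) ≤ s * (128 * x ^ 2 + 24 * x) :=
    mul_nonneg hs.le (by positivity)
  have hPD : 0 * ((16 * x + 1) * (16 * x + 3)) ≤
      (a * (2 * x + 1) + 2 * a * c * s - 6 * s * (2 * x + 1)) * ((16 * x + 1) * (16 * x + 3)) := by
    nlinarith [t1, t2, t3]
  have hgoal : 6 * s * (2 * x + 1) ≤ a * (2 * x + 1) + 2 * a * c * s := by
    have := le_of_mul_le_mul_right hPD hD
    linarith
  rw [div_add_div _ _ (ne_of_gt hs) (by positivity : (2 * x + 1) ≠ 0),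
    div_le_div_iff₀ ha (by positivity)]
  nlinarith [hgoal, hs, ha, hc, hx0]

end Aux19

theorem stmt19' (k : ℕ) (hk : 1 ≤ k) :
    (Nat.choose (2 * k) k : ℝ) / ((k : ℝ) + 1) < 4 ^ k / (((k : ℝ) + 1) * Real.sqrt (π * k)) ∧
    2 ^ (2 * k + 1) / (((k : ℝ) + 1) * Real.sqrt (π * (4 * (k : ℝ) + 1))) - (Nat.choose (2 * k) k : ℝ) / ((k : ℝ) + 1) ≤
      1 / 3 * (4 ^ k / (((k : ℝ) + 1) * Real.sqrt (π * k)) - (Nat.choose (2 * k) k : ℝ) / ((k : ℝ) + 1)) := by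
  have hk1 : (1:ℝ) ≤ (k:ℝ) := by exact_mod_cast hk
  have hk0 : (0:ℝ) < (k:ℝ) := by linarith
  have hK : (0:ℝ) < (k:ℝ) + 1 := by linarith
  have hQ : (0:ℝ) < Real.sqrt (π * k) := Real.sqrt_pos.mpr (by positivity)
  have hP : (0:ℝ) < Real.sqrt (π * (4 * (k:ℝ) + 1)) := Real.sqrt_pos.mpr (by positivity)
  have hb_up := Aux19.binom_upper k hk
  have hb_lo := Aux19.binom_lower k hk
  constructor
  · have hcq : (Nat.choose (2 * k) k : ℝ) * Real.sqrt (π * k) < 4 ^ k := (lt_div_iff₀ hQ).mp hb_up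
    rw [div_lt_div_iff₀ hK (by positivity)]
    nlinarith [mul_lt_mul_of_pos_right hcq hK]
  · set c : ℝ := (Nat.choose (2 * k) k : ℝ) with hcdef
    have hsπ : (0:ℝ) < Real.sqrt π := Real.sqrt_pos.mpr pi_pos
    have hsk : (0:ℝ) < Real.sqrt (k:ℝ) := Real.sqrt_pos.mpr hk0
    have hs41 : (0:ℝ) < Real.sqrt (4 * (k:ℝ) + 1) := Real.sqrt_pos.mpr (by linarith)
    have e3 : Real.sqrt (π * (4 * (k:ℝ) + 1)) = Real.sqrt π * Real.sqrt (4 * (k:ℝ) + 1) :=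
      Real.sqrt_mul pi_pos.le _
    have e4 : Real.sqrt (π * (k:ℝ)) = Real.sqrt π * Real.sqrt (k:ℝ) :=
      Real.sqrt_mul pi_pos.le _
    have hkey := Aux19.key (k:ℝ) hk1
    have hmul := mul_le_mul_of_nonneg_left hkey
      (le_of_lt (show (0:ℝ) < 4 ^ k / Real.sqrt π by positivity))
    have hkey2 : 6 * 4 ^ k / Real.sqrt (π * (4 * (k:ℝ) + 1)) ≤
        4 ^ k / Real.sqrt (π * (k:ℝ)) +
          2 * (4 ^ k * Real.sqrt (4 * (k:ℝ) + 3) / (Real.sqrt π * (2 * (k:ℝ) + 1))) := by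
      rw [e3, e4]
      calc 6 * 4 ^ k / (Real.sqrt π * Real.sqrt (4 * (k:ℝ) + 1))
          = 4 ^ k / Real.sqrt π * (6 / Real.sqrt (4 * (k:ℝ) + 1)) := by
            field_simp
        _ ≤ 4 ^ k / Real.sqrt π *
            (1 / Real.sqrt (k:ℝ) + 2 * Real.sqrt (4 * (k:ℝ) + 3) / (2 * (k:ℝ) + 1)) := hmul
        _ = 4 ^ k / (Real.sqrt π * Real.sqrt (k:ℝ)) +
            2 * (4 ^ k * Real.sqrt (4 * (k:ℝ) + 3) / (Real.sqrt π * (2 * (k:ℝ) + 1))) := by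
            field_simp
    have hkey3 : 6 * 4 ^ k / Real.sqrt (π * (4 * (k:ℝ) + 1)) ≤
        4 ^ k / Real.sqrt (π * (k:ℝ)) + 2 * c := by
      refine hkey2.trans ?_
      linarith [hb_lo]
    have e2 : (2:ℝ) ^ (2 * k + 1) = 2 * 4 ^ k := by
      rw [pow_succ, pow_mul]; norm_num; ring
    rw [e2]
    have main : 2 * 4 ^ k / Real.sqrt (π * (4 * (k:ℝ) + 1)) - c ≤
        1 / 3 * (4 ^ k / Real.sqrt (π * (k:ℝ)) - c) := by
      rw [mul_div_assoc] at hkey3 ⊢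
      generalize hA : (4:ℝ) ^ k / Real.sqrt (π * (4 * (k:ℝ) + 1)) = A at *
      generalize hB : (4:ℝ) ^ k / Real.sqrt (π * (k:ℝ)) = B at *
      linarith
    have lhs_eq : 2 * 4 ^ k / (((k:ℝ) + 1) * Real.sqrt (π * (4 * (k:ℝ) + 1))) - c / ((k:ℝ) + 1)
        = (2 * 4 ^ k / Real.sqrt (π * (4 * (k:ℝ) + 1)) - c) * (1 / ((k:ℝ) + 1)) := by
      field_simp
    have rhs_eq : 1 / 3 * (4 ^ k / (((k:ℝ) + 1) * Real.sqrt (π * (k:ℝ))) - c / ((k:ℝ) + 1))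
        = (1 / 3 * (4 ^ k / Real.sqrt (π * (k:ℝ)) - c)) * (1 / ((k:ℝ) + 1)) := by
      field_simp
    rw [lhs_eq, rhs_eq]
    exact mul_le_mul_of_nonneg_right main (by positivity)

theorem stmt19 (k : ℕ) (hk : 1 ≤ k) :
    C k < 4 ^ k / (((k : ℝ) + 1) * Real.sqrt (π * k)) ∧
    2 ^ (2 * k + 1) / (((k : ℝ) + 1) * Real.sqrt (π * (4 * (k : ℝ) + 1))) - C k ≤
      1 / 3 * (4 ^ k / (((k : ℝ) + 1) * Real.sqrt (π * k)) - C k) := by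
  have h := stmt19' k hk
  simpa only [C] using h
end
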